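/- arXiv:1912.04997 — 5 statements merged into one kernel-verified Lean document; each statement's English description precedes it below -/
import Mathlib

section
/- Let F be a non-Archimedean local field and let Cr = {(x,y) ∈ F × F : x·y = 0} (the 'cross') with the subspace topology of F². The group Fˣ acts on Cr by λ·(x,y) = (λx, λ⁻¹y), and σ(x,y) = (y,x) denotes the swap. Then every Fˣ-invariant distribution on Cr is σ-invariant: if a ℂ-linear functional ξ on the Schwartz space S(Cr) satisfies ξ((x,y) ↦ f(λ⁻¹x, λy)) = ξ(f) for all λ ∈ Fˣ and f ∈ S(Cr), then ξ(f ∘ σ) = ξ(f) for all f ∈ S(Cr). -/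
open Function
set_option linter.unusedSectionVars false
set_option maxHeartbeats 1000000

noncomputable section

/-- The Schwartz space of a topological space: locally constant,
compactly supported complex-valued functions. -/
def Schwartz (Y : Type) [TopologicalSpace Y] : Submodule ℂ (Y → ℂ) where
  carrier := {f | IsLocallyConstant f ∧ HasCompactSupport f}
  zero_mem' := ⟨IsLocallyConstant.const 0, HasCompactSupport.zero⟩
  add_mem' := fun hf hg => ⟨hf.1.add hg.1, hf.2.add hg.2⟩
  smul_mem' := fun c f hf =>
    ⟨hf.1.comp (c • ·), hf.2.mono (Function.support_const_smul_subset c f)⟩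

/-- The cross `{(x,y) ∈ F² | x·y = 0}`, with the subspace topology. -/
def Cross (F : Type) [Field F] [TopologicalSpace F] := {p : F × F // p.1 * p.2 = 0}

instance (F : Type) [Field F] [TopologicalSpace F] : TopologicalSpace (Cross F) :=
  instTopologicalSpaceSubtype

variable {F : Type} [Field F] [TopologicalSpace F]

/-- The map `(x, y) ↦ (λ⁻¹ x, λ y)` on the cross. -/
def crossAct (l : Fˣ) (p : Cross F) : Cross F :=
  ⟨((l : F)⁻¹ * p.1.1, (l : F) * p.1.2), by
    have h := p.2
    calc ((l : F)⁻¹ * p.1.1) * ((l : F) * p.1.2)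
        = ((l : F)⁻¹ * (l : F)) * (p.1.1 * p.1.2) := by ring
      _ = 0 := by rw [inv_mul_cancel₀ (Units.ne_zero l), h, mul_zero]⟩

/-- The swap `(x,y) ↦ (y,x)` on the cross. -/
def crossSwap (p : Cross F) : Cross F :=
  ⟨(p.1.2, p.1.1), by rw [mul_comm]; exact p.2⟩

open Set Topology

namespace CrossAux

variable {F : Type} [Field F] [TopologicalSpace F]

instance [T2Space F] : T2Space (Cross F) :=
  inferInstanceAs (T2Space {p : F × F // p.1 * p.2 = 0})

def eA (x : F) : Cross F := ⟨(x, 0), mul_zero x⟩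
def eB (y : F) : Cross F := ⟨(0, y), zero_mul y⟩

lemma continuous_eA : Continuous (eA (F := F)) :=
  Continuous.subtype_mk (continuous_id.prodMk continuous_const) _
lemma continuous_eB : Continuous (eB (F := F)) :=
  Continuous.subtype_mk (continuous_const.prodMk continuous_id) _

lemma continuous_c1 : Continuous (fun p : Cross F => p.1.1) :=
  continuous_fst.comp continuous_subtype_val
lemma continuous_c2 : Continuous (fun p : Cross F => p.1.2) :=
  continuous_snd.comp continuous_subtype_val

lemma cross_cases (p : Cross F) : p.1.1 = 0 ∨ p.1.2 = 0 := mul_eq_zero.mp p.2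

lemma eq_eA (p : Cross F) (h : p.1.2 = 0) : p = eA p.1.1 :=
  Subtype.ext (Prod.ext rfl h)
lemma eq_eB (p : Cross F) (h : p.1.1 = 0) : p = eB p.1.2 :=
  Subtype.ext (Prod.ext h rfl)

/-- indicator of a set -/
def ind (S : Set F) : F → ℂ := S.indicator (fun _ => 1)

lemma ind_of_mem {S : Set F} {x : F} (h : x ∈ S) : ind S x = 1 := Set.indicator_of_mem h _
lemma ind_of_not_mem {S : Set F} {x : F} (h : x ∉ S) : ind S x = 0 := Set.indicator_of_notMem h _

lemma isLocallyConstant_ind {S : Set F} (h : IsClopen S) : IsLocallyConstant (ind S) := by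
  intro s
  by_cases h1 : (1:ℂ) ∈ s <;> by_cases h0 : (0:ℂ) ∈ s
  · have e : ind S ⁻¹' s = univ :=
      eq_univ_of_forall fun x => by by_cases hx : x ∈ S <;> simp [mem_preimage, ind_of_mem, ind_of_not_mem, hx, h1, h0]
    rw [e]; exact isOpen_univ
  · have e : ind S ⁻¹' s = S := by
      ext x; by_cases hx : x ∈ S <;> simp [mem_preimage, ind_of_mem, ind_of_not_mem, hx, h1, h0]
    rw [e]; exact h.2
  · have e : ind S ⁻¹' s = Sᶜ := by
      ext x; by_cases hx : x ∈ S <;> simp [mem_preimage, ind_of_mem, ind_of_not_mem, hx, h1, h0]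
    rw [e]; exact h.1.isOpen_compl
  · have e : ind S ⁻¹' s = ∅ := by
      ext x; by_cases hx : x ∈ S <;> simp [mem_preimage, ind_of_mem, ind_of_not_mem, hx, h1, h0]
    rw [e]; exact isOpen_empty

def indA (S : Set F) : Cross F → ℂ := fun p => ind S p.1.1
def indB (S : Set F) : Cross F → ℂ := fun p => ind S p.1.2
def indK (S T : Set F) : Cross F → ℂ := fun p => ind S p.1.1 * ind T p.1.2

variable [T2Space F]

lemma indA_mem {S : Set F} (hcl : IsClopen S) (hc : IsCompact S) (h0 : (0:F) ∉ S) :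
    indA S ∈ Schwartz (Cross F) := by
  refine ⟨(isLocallyConstant_ind hcl).comp_continuous continuous_c1, ?_⟩
  apply HasCompactSupport.intro (hc.image continuous_eA)
  intro p hp
  have hmem : p.1.1 ∉ S := by
    intro hmem
    have h2 : p.1.2 = 0 := (cross_cases p).resolve_left (fun h => h0 (h ▸ hmem))
    exact hp ⟨p.1.1, hmem, (eq_eA p h2).symm⟩
  exact ind_of_not_mem hmem

lemma indB_mem {S : Set F} (hcl : IsClopen S) (hc : IsCompact S) (h0 : (0:F) ∉ S) :
    indB S ∈ Schwartz (Cross F) := by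
  refine ⟨(isLocallyConstant_ind hcl).comp_continuous continuous_c2, ?_⟩
  apply HasCompactSupport.intro (hc.image continuous_eB)
  intro p hp
  have hmem : p.1.2 ∉ S := by
    intro hmem
    have h1 : p.1.1 = 0 := (cross_cases p).resolve_right (fun h => h0 (h ▸ hmem))
    exact hp ⟨p.1.2, hmem, (eq_eB p h1).symm⟩
  exact ind_of_not_mem hmem

lemma indK_mem {S T : Set F} (hclS : IsClopen S) (hcS : IsCompact S)
    (hclT : IsClopen T) (hcT : IsCompact T) :
    indK S T ∈ Schwartz (Cross F) := by
  refine ⟨((isLocallyConstant_ind hclS).comp_continuous continuous_c1).mul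
    ((isLocallyConstant_ind hclT).comp_continuous continuous_c2), ?_⟩
  apply HasCompactSupport.intro ((hcS.image continuous_eA).union (hcT.image continuous_eB))
  intro p hp
  rcases cross_cases p with h1 | h2
  · have hm : p.1.2 ∉ T := fun hm => hp (Or.inr ⟨p.1.2, hm, (eq_eB p h1).symm⟩)
    show ind S p.1.1 * ind T p.1.2 = 0
    rw [ind_of_not_mem hm, mul_zero]
  · have hm : p.1.1 ∉ S := fun hm => hp (Or.inl ⟨p.1.1, hm, (eq_eA p h2).symm⟩)
    show ind S p.1.1 * ind T p.1.2 = 0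
    rw [ind_of_not_mem hm, zero_mul]


section Tube

variable [IsTopologicalRing F]

/-- Tube lemma for multiplication. -/
lemma tube_mul {T P : Set F} (hT : IsCompact T) (hP : IsOpen P) (a : F)
    (h : ∀ t ∈ T, a * t ∈ P) :
    ∃ V : Set F, IsOpen V ∧ a ∈ V ∧ ∀ u ∈ V, ∀ t ∈ T, u * t ∈ P := by
  have hn : IsOpen ((fun q : F × F => q.1 * q.2) ⁻¹' P) := hP.preimage continuous_mul
  have hsub : ({a} : Set F) ×ˢ T ⊆ (fun q : F × F => q.1 * q.2) ⁻¹' P := by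
    rintro ⟨x, y⟩ ⟨hx, hy⟩
    have : x = a := hx
    subst this
    exact h y hy
  obtain ⟨u, v, huo, hvo, hau, hTv, huv⟩ :=
    generalized_tube_lemma isCompact_singleton hT hn hsub
  exact ⟨u, huo, hau rfl, fun x hx t ht => huv (Set.mk_mem_prod hx (hTv ht))⟩

/-- Tube lemma for addition. -/
lemma tube_add {T P : Set F} (hT : IsCompact T) (hP : IsOpen P)
    (h : ∀ t ∈ T, t ∈ P) :
    ∃ V : Set F, IsOpen V ∧ (0:F) ∈ V ∧ ∀ u ∈ V, ∀ t ∈ T, u + t ∈ P := by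
  have hn : IsOpen ((fun q : F × F => q.1 + q.2) ⁻¹' P) := hP.preimage continuous_add
  have hsub : ({(0:F)} : Set F) ×ˢ T ⊆ (fun q : F × F => q.1 + q.2) ⁻¹' P := by
    rintro ⟨x, y⟩ ⟨hx, hy⟩
    have : x = 0 := hx
    subst this
    simpa using h y hy
  obtain ⟨u, v, huo, hvo, hau, hTv, huv⟩ :=
    generalized_tube_lemma isCompact_singleton hT hn hsub
  exact ⟨u, huo, hau rfl, fun x hx t ht => huv (Set.mk_mem_prod hx (hTv ht))⟩

end Tube

section Kgroup

variable [IsTopologicalRing F] [LocallyCompactSpace F] [TotallyDisconnectedSpace F]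

/-- A compact clopen neighbourhood of 0. -/
lemma exists_compact_clopen_nhd : ∃ V : Set F, IsClopen V ∧ IsCompact V ∧ (0:F) ∈ V := by
  obtain ⟨s, hs_comp, hxs, -⟩ := exists_compact_subset isOpen_univ (mem_univ (0:F))
  have hb := loc_compact_Haus_tot_disc_of_zero_dim (H := F)
  obtain ⟨V, hV, h0V, hVs⟩ := hb.mem_nhds_iff.mp (isOpen_interior.mem_nhds hxs)
  exact ⟨V, hV, hs_comp.of_isClosed_subset hV.1 (hVs.trans interior_subset), h0V⟩

/-- A compact open additive subgroup of F. -/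
lemma exists_compact_open_addSubgroup :
    ∃ K : Set F, IsClopen K ∧ IsCompact K ∧ (0:F) ∈ K ∧
      (∀ x ∈ K, ∀ y ∈ K, x + y ∈ K) ∧ (∀ x ∈ K, -x ∈ K) := by
  obtain ⟨V, hVcl, hVc, h0V⟩ := exists_compact_clopen_nhd (F := F)
  obtain ⟨W, hWo, h0W, hW⟩ := tube_add hVc hVcl.2 (fun t ht => ht)
  set K : Set F := {x | (∀ v ∈ V, x + v ∈ V) ∧ (∀ v ∈ V, -x + v ∈ V)} with hK
  have hKadd : ∀ x ∈ K, ∀ y ∈ K, x + y ∈ K := by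
    rintro x ⟨hx1, hx2⟩ y ⟨hy1, hy2⟩
    constructor
    · intro v hv
      have := hx1 _ (hy1 v hv)
      rwa [← add_assoc] at this
    · intro v hv
      have := hy2 _ (hx2 v hv)
      rwa [← add_assoc, ← neg_add, add_comm y x] at this
  have hKneg : ∀ x ∈ K, -x ∈ K := by
    rintro x ⟨hx1, hx2⟩
    exact ⟨hx2, by simpa using hx1⟩
  have h0K : (0:F) ∈ K := ⟨fun v hv => by simpa using hv, fun v hv => by simpa using hv⟩
  have hKV : K ⊆ V := fun x hx => by simpa using hx.1 0 h0V
  have hWK : W ∩ (Neg.neg ⁻¹' W) ⊆ K := by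
    rintro x ⟨hx1, hx2⟩
    exact ⟨fun v hv => hW x hx1 v hv, fun v hv => hW (-x) hx2 v hv⟩
  have hKclosed : IsClosed K := by
    have h1 : IsClosed {x : F | ∀ v ∈ V, x + v ∈ V} := by
      have : {x : F | ∀ v ∈ V, x + v ∈ V} = ⋂ v ∈ V, (fun x => x + v) ⁻¹' V := by
        ext x; simp
      rw [this]
      exact isClosed_biInter fun v hv => hVcl.1.preimage (continuous_add_right v)
    have h2 : IsClosed {x : F | ∀ v ∈ V, -x + v ∈ V} := by
      have : {x : F | ∀ v ∈ V, -x + v ∈ V} = ⋂ v ∈ V, (fun x => -x + v) ⁻¹' V := by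
        ext x; simp
      rw [this]
      exact isClosed_biInter fun v hv =>
        hVcl.1.preimage ((continuous_neg).add continuous_const)
    have : K = {x : F | ∀ v ∈ V, x + v ∈ V} ∩ {x : F | ∀ v ∈ V, -x + v ∈ V} := by
      ext x; exact Iff.rfl
    rw [this]; exact h1.inter h2
  have hKopen : IsOpen K := by
    rw [isOpen_iff_forall_mem_open]
    intro x hx
    refine ⟨(fun w => x + w) '' (W ∩ (Neg.neg ⁻¹' W)), ?_, ?_, ?_⟩
    · rintro y ⟨w, hw, rfl⟩
      exact hKadd x hx w (hWK hw)
    · exact (Homeomorph.addLeft x).isOpenMap _ (hWo.inter (hWo.preimage continuous_neg))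
    · exact ⟨0, ⟨h0W, by simpa using h0W⟩, by simp⟩
  exact ⟨K, ⟨hKclosed, hKopen⟩, hVc.of_isClosed_subset hKclosed hKV, h0K, hKadd, hKneg⟩

end Kgroup


section MulGroup

variable [IsTopologicalDivisionRing F]

structure IsMulSub (U : Set F) : Prop where
  one_mem : (1:F) ∈ U
  mul_mem : ∀ u ∈ U, ∀ v ∈ U, u * v ∈ U
  inv_mem : ∀ u ∈ U, u⁻¹ ∈ U
  zero_not_mem : (0:F) ∉ U

def mset (a : F) (U : Set F) : Set F := (fun x => a * x) '' U

lemma mset_mset (a b : F) (U : Set F) : mset a (mset b U) = mset (a * b) U := by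
  unfold mset; rw [Set.image_image]; simp [mul_assoc]

lemma mset_one (S : Set F) : mset 1 S = S := by
  unfold mset; simp

lemma self_mem_mset {a : F} {U : Set F} (h1 : (1:F) ∈ U) : a ∈ mset a U :=
  ⟨1, h1, mul_one a⟩

lemma mem_mset {a x : F} (ha : a ≠ 0) {U : Set F} : x ∈ mset a U ↔ a⁻¹ * x ∈ U := by
  constructor
  · rintro ⟨u, hu, rfl⟩; rwa [← mul_assoc, inv_mul_cancel₀ ha, one_mul]
  · intro h; exact ⟨a⁻¹ * x, h, by show a * (a⁻¹ * x) = x; rw [← mul_assoc, mul_inv_cancel₀ ha, one_mul]⟩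

lemma zero_not_mem_mset {a : F} (ha : a ≠ 0) {U : Set F} (h0 : (0:F) ∉ U) :
    (0:F) ∉ mset a U := by
  rintro ⟨u, hu, hau⟩
  exact h0 ((eq_zero_of_ne_zero_of_mul_left_eq_zero ha hau) ▸ hu)

lemma mset_self {U : Set F} (hU : IsMulSub U) {u : F} (hu : u ∈ U) : mset u U = U := by
  have hune : u ≠ 0 := fun h => hU.zero_not_mem (h ▸ hu)
  ext x
  rw [mem_mset hune]
  constructor
  · intro h
    have := hU.mul_mem u hu _ h
    rwa [← mul_assoc, mul_inv_cancel₀ hune, one_mul] at this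
  · intro h
    exact hU.mul_mem _ (hU.inv_mem u hu) _ h

lemma mset_isOpen {a : F} (ha : a ≠ 0) {U : Set F} (h : IsOpen U) : IsOpen (mset a U) :=
  (Homeomorph.mulLeft₀ a ha).isOpenMap U h

lemma mset_isClosed {a : F} (ha : a ≠ 0) {U : Set F} (h : IsClosed U) :
    IsClosed (mset a U) := by
  have : mset a U = (Homeomorph.mulLeft₀ a ha).symm ⁻¹' U := by
    ext x
    rw [mem_mset ha]
    rfl
  rw [this]
  exact h.preimage (Homeomorph.mulLeft₀ a ha).symm.continuous

lemma mset_isClopen {a : F} (ha : a ≠ 0) {U : Set F} (h : IsClopen U) :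
    IsClopen (mset a U) := ⟨mset_isClosed ha h.1, mset_isOpen ha h.2⟩

lemma mset_isCompact {a : F} {U : Set F} (h : IsCompact U) : IsCompact (mset a U) :=
  h.image (continuous_mul_left a)

lemma mset_eq_or_disjoint {U : Set F} (hU : IsMulSub U) {a b : F} (ha : a ≠ 0) (hb : b ≠ 0) :
    mset a U = mset b U ∨ Disjoint (mset a U) (mset b U) := by
  rcases Classical.em (Disjoint (mset a U) (mset b U)) with h | h
  · exact Or.inr h
  left
  rw [Set.not_disjoint_iff] at h
  obtain ⟨x, hxa, hxb⟩ := h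
  obtain ⟨u, hu, hux⟩ := hxa
  obtain ⟨v, hv, hvx⟩ := hxb
  have hune : u ≠ 0 := fun h => hU.zero_not_mem (h ▸ hu)
  have hab : a = b * (v * u⁻¹) := by
    simp only at hux hvx
    field_simp
    rw [hux, hvx]
  rw [hab, ← mset_mset, mset_self hU (hU.mul_mem v hv _ (hU.inv_mem u hu))]

def stab (S : Set F) : Set F := {u | u ≠ 0 ∧ mset u S = S}

lemma stab_isMulSub (S : Set F) : IsMulSub (stab S) where
  one_mem := ⟨one_ne_zero, mset_one S⟩
  mul_mem := by
    rintro u ⟨hu0, hu⟩ v ⟨hv0, hv⟩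
    exact ⟨mul_ne_zero hu0 hv0, by rw [← mset_mset, hv, hu]⟩
  inv_mem := by
    rintro u ⟨hu0, hu⟩
    refine ⟨inv_ne_zero hu0, ?_⟩
    conv_lhs => rw [← hu]
    rw [mset_mset, inv_mul_cancel₀ hu0, mset_one]
  zero_not_mem := by rintro ⟨h, -⟩; exact h rfl

lemma stab_isOpen {S : Set F} (hc : IsCompact S) (ho : IsOpen S) : IsOpen (stab S) := by
  obtain ⟨V, hVo, h1V, hV⟩ := tube_mul hc ho 1 (fun t ht => by simpa using ht)
  set W := V ∩ (({0}ᶜ : Set F) ∩ Inv.inv ⁻¹' V) with hWdef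
  have hWo : IsOpen W :=
    hVo.inter (continuousOn_inv₀.isOpen_inter_preimage isOpen_compl_singleton hVo)
  have h1W : (1:F) ∈ W := ⟨h1V, by simp, by simpa using h1V⟩
  have hWstab : W ⊆ stab S := by
    rintro w ⟨hwV, hwne, hwinv⟩
    have hwne' : w ≠ 0 := hwne
    refine ⟨hwne', Set.Subset.antisymm ?_ ?_⟩
    · rintro x ⟨s, hs, rfl⟩
      exact hV w hwV s hs
    · intro s hs
      rw [mem_mset hwne']
      exact hV w⁻¹ hwinv s hs
  rw [isOpen_iff_forall_mem_open]
  intro g hg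
  refine ⟨mset g W, ?_, mset_isOpen hg.1 hWo, self_mem_mset h1W⟩
  rintro y ⟨w, hw, rfl⟩
  exact (stab_isMulSub S).mul_mem g hg w (hWstab hw)

lemma stab_spec {S : Set F} {u : F} (hu : u ∈ stab S) : mset u S = S := hu.2

end MulGroup


section Subgroup

variable [IsTopologicalDivisionRing F] [LocallyCompactSpace F] [TotallyDisconnectedSpace F]

lemma exists_good_subgroup (hF : ¬ DiscreteTopology F) (S C : Set F)
    (hSc : IsCompact S) (hSo : IsOpen S) (hCc : IsCompact C) (hCo : IsOpen C) :
    ∃ U : Set F, IsMulSub U ∧ IsClopen U ∧ IsCompact U ∧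
      (∀ u ∈ U, mset u S = S) ∧ (∀ u ∈ U, mset u C = C) := by
  obtain ⟨K, hKcl, hKc, h0K, hKadd, hKneg⟩ := exists_compact_open_addSubgroup (F := F)
  -- a nonzero element of K
  have hk0 : ∃ k₀ ∈ K, k₀ ≠ (0:F) := by
    by_contra h
    push_neg at h
    have : K = {0} := Set.Subset.antisymm (fun x hx => h x hx) (by simpa using h0K)
    exact hF (discreteTopology_iff_isOpen_singleton_zero.mpr (this ▸ hKcl.2))
  obtain ⟨k₀, hk₀K, hk₀ne⟩ := hk0
  -- the compact open "ring" O
  set O : Set F := {u | ∀ k ∈ K, u * k ∈ K} with hOdef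
  have h1O : (1:F) ∈ O := fun k hk => by simpa using hk
  have hOmul : ∀ u ∈ O, ∀ v ∈ O, u * v ∈ O := by
    intro u hu v hv k hk
    rw [mul_assoc]
    exact hu _ (hv _ hk)
  have hOclosed : IsClosed O := by
    have : O = ⋂ k ∈ K, (fun u => u * k) ⁻¹' K := by ext u; simp [hOdef]
    rw [this]
    exact isClosed_biInter fun k hk => hKcl.1.preimage (continuous_mul_right k)
  have hOopen : IsOpen O := by
    obtain ⟨V, hVo, h0V, hV⟩ := tube_mul hKc hKcl.2 0 (fun k hk => by simpa using h0K)
    rw [isOpen_iff_forall_mem_open]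
    intro u hu
    refine ⟨(fun w => u + w) '' V, ?_, (Homeomorph.addLeft u).isOpenMap _ hVo,
      ⟨0, h0V, by simp⟩⟩
    rintro y ⟨w, hw, rfl⟩
    intro k hk
    rw [add_mul]
    exact hKadd _ (hu k hk) _ (hV w hw k hk)
  have hOc : IsCompact O := by
    have hsub : O ⊆ (fun u => u * k₀) ⁻¹' K := fun u hu => hu k₀ hk₀K
    have : IsCompact ((fun u => u * k₀) ⁻¹' K) :=
      (Homeomorph.mulRight₀ k₀ hk₀ne).isCompact_preimage.mpr hKc
    exact this.of_isClosed_subset hOclosed hsub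
  -- the compact group of invertibles of O
  set Z : Set (F × F) := {q | q.1 ∈ O ∧ q.2 ∈ O ∧ q.1 * q.2 = 1} with hZdef
  have hZc : IsCompact Z := by
    have hZclosed : IsClosed Z := by
      apply IsClosed.inter (hOclosed.preimage continuous_fst)
      apply IsClosed.inter (hOclosed.preimage continuous_snd)
      exact isClosed_eq continuous_mul continuous_const
    exact (hOc.prod hOc).of_isClosed_subset hZclosed (fun q hq => ⟨hq.1, hq.2.1⟩)
  set U₁ : Set F := Prod.fst '' Z with hU₁def
  have hU₁c : IsCompact U₁ := hZc.image continuous_fst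
  have memU₁ : ∀ u : F, u ∈ U₁ ↔ u ∈ O ∧ u ≠ 0 ∧ u⁻¹ ∈ O := by
    intro u
    constructor
    · rintro ⟨⟨a, b⟩, ⟨h1, h2, h3⟩, rfl⟩
      have hane : a ≠ 0 := left_ne_zero_of_mul_eq_one h3
      have : b = a⁻¹ := by field_simp at h3 ⊢; linear_combination h3 -- fix later
      exact ⟨h1, hane, this ▸ h2⟩
    · rintro ⟨h1, h2, h3⟩
      exact ⟨(u, u⁻¹), ⟨h1, h3, mul_inv_cancel₀ h2⟩, rfl⟩
  have hU₁sub : IsMulSub U₁ := by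
    constructor
    · rw [memU₁]; exact ⟨h1O, one_ne_zero, by simpa using h1O⟩
    · intro u hu v hv
      rw [memU₁] at hu hv ⊢
      refine ⟨hOmul _ hu.1 _ hv.1, mul_ne_zero hu.2.1 hv.2.1, ?_⟩
      rw [mul_inv_rev]
      exact hOmul _ hv.2.2 _ hu.2.2
    · intro u hu
      rw [memU₁] at hu ⊢
      exact ⟨hu.2.2, inv_ne_zero hu.2.1, by rw [inv_inv]; exact hu.1⟩
    · rw [memU₁]; rintro ⟨-, h, -⟩; exact h rfl
  have hU₁open : IsOpen U₁ := by
    have hNo : IsOpen (O ∩ (({0}ᶜ : Set F) ∩ Inv.inv ⁻¹' O)) :=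
      hOopen.inter (continuousOn_inv₀.isOpen_inter_preimage isOpen_compl_singleton hOopen)
    have hNU : O ∩ (({0}ᶜ : Set F) ∩ Inv.inv ⁻¹' O) ⊆ U₁ := by
      rintro u ⟨h1, h2, h3⟩
      rw [memU₁]; exact ⟨h1, h2, h3⟩
    have h1N : (1:F) ∈ O ∩ (({0}ᶜ : Set F) ∩ Inv.inv ⁻¹' O) :=
      ⟨h1O, by simp, by simpa using h1O⟩
    rw [isOpen_iff_forall_mem_open]
    intro g hg
    have hgne : g ≠ 0 := ((memU₁ g).mp hg).2.1
    refine ⟨mset g (O ∩ (({0}ᶜ : Set F) ∩ Inv.inv ⁻¹' O)), ?_,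
      mset_isOpen hgne hNo, self_mem_mset h1N⟩
    rintro y ⟨w, hw, rfl⟩
    exact hU₁sub.mul_mem g hg w (hNU hw)
  -- intersect with the stabilizers
  set U : Set F := U₁ ∩ (stab S ∩ stab C) with hUdef
  have hUsub : IsMulSub U := by
    constructor
    · exact ⟨hU₁sub.one_mem, (stab_isMulSub S).one_mem, (stab_isMulSub C).one_mem⟩
    · rintro u ⟨hu1, hu2, hu3⟩ v ⟨hv1, hv2, hv3⟩
      exact ⟨hU₁sub.mul_mem _ hu1 _ hv1, (stab_isMulSub S).mul_mem _ hu2 _ hv2,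
        (stab_isMulSub C).mul_mem _ hu3 _ hv3⟩
    · rintro u ⟨hu1, hu2, hu3⟩
      exact ⟨hU₁sub.inv_mem _ hu1, (stab_isMulSub S).inv_mem _ hu2,
        (stab_isMulSub C).inv_mem _ hu3⟩
    · rintro ⟨h, -, -⟩; exact hU₁sub.zero_not_mem h
  have hUopen : IsOpen U :=
    hU₁open.inter ((stab_isOpen hSc hSo).inter (stab_isOpen hCc hCo))
  have hUU₁ : U ⊆ U₁ := Set.inter_subset_left
  have hUclosed : IsClosed U := by
    have hopen : IsOpen (U₁ \ U) := by
      have : U₁ \ U = ⋃ g ∈ U₁ \ U, mset g U := by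
        apply Set.Subset.antisymm
        · intro g hg
          exact Set.mem_biUnion hg (self_mem_mset hUsub.one_mem)
        · rintro y hy
          simp only [Set.mem_iUnion] at hy
          obtain ⟨g, hg, u, hu, rfl⟩ := hy
          constructor
          · exact hU₁sub.mul_mem _ hg.1 _ (hUU₁ hu)
          · intro hgu
            apply hg.2
            have hune : u ≠ 0 := fun h => hUsub.zero_not_mem (h ▸ hu)
            have : g = (g * u) * u⁻¹ := by
              rw [mul_assoc, mul_inv_cancel₀ hune, mul_one]
            rw [this]
            exact hUsub.mul_mem _ hgu _ (hUsub.inv_mem _ hu)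
      rw [this]
      apply isOpen_biUnion
      intro g hg
      have hgne : g ≠ 0 := ((memU₁ g).mp hg.1).2.1
      exact mset_isOpen hgne hUopen
    have : U = U₁ ∩ (U₁ \ U)ᶜ := by
      apply Set.Subset.antisymm
      · intro u hu
        exact ⟨hUU₁ hu, fun h => h.2 hu⟩
      · rintro u ⟨h1, h2⟩
        by_contra h
        exact h2 ⟨h1, h⟩
    rw [this]
    exact (hU₁c.isClosed).inter hopen.isClosed_compl
  have hUc : IsCompact U := hU₁c.of_isClosed_subset hUclosed hUU₁
  exact ⟨U, hUsub, ⟨hUclosed, hUopen⟩, hUc,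
    fun u hu => stab_spec hu.2.1, fun u hu => stab_spec hu.2.2⟩

end Subgroup


section Decomp

variable [IsTopologicalDivisionRing F]

/-- deduplication of a coset cover -/
lemma dedupe {U : Set F} (hU : IsMulSub U) (t : Finset F) (hne : ∀ a ∈ t, a ≠ (0:F)) :
    ∃ t' : Finset F, t' ⊆ t ∧
      (⋃ a ∈ t', mset a U) = (⋃ a ∈ t, mset a U) ∧
      (t' : Set F).Pairwise fun a b => Disjoint (mset a U) (mset b U) := by
  classical
  induction t using Finset.induction_on with
  | empty => exact ⟨∅, by simp, rfl, by simp⟩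
  | @insert a s ha ih =>
    obtain ⟨t', ht'sub, ht'cov, ht'disj⟩ :=
      ih (fun b hb => hne b (Finset.mem_insert_of_mem hb))
    have hane : a ≠ 0 := hne a (Finset.mem_insert_self a s)
    by_cases hcase : ∀ b ∈ t', Disjoint (mset a U) (mset b U)
    · refine ⟨insert a t', Finset.insert_subset_insert a ht'sub, ?_, ?_⟩
      · rw [Finset.set_biUnion_insert, Finset.set_biUnion_insert, ht'cov]
      · rw [Finset.coe_insert]
        apply Set.Pairwise.insert ht'disj
        intro b hb hab
        have hbne : b ≠ 0 := hne b (Finset.mem_insert_of_mem (ht'sub hb))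
        exact ⟨hcase b hb, (hcase b hb).symm⟩
    · push_neg at hcase
      obtain ⟨b, hb, hnd⟩ := hcase
      have hbne : b ≠ 0 := hne b (Finset.mem_insert_of_mem (ht'sub hb))
      have heq : mset a U = mset b U := (mset_eq_or_disjoint hU hane hbne).resolve_right hnd
      refine ⟨t', ht'sub.trans (Finset.subset_insert a s), ?_, ht'disj⟩
      rw [Finset.set_biUnion_insert, ht'cov]
      have hsub2 : mset a U ⊆ ⋃ c ∈ s, mset c U := by
        rw [heq, ← ht'cov]
        intro y hy
        simp only [Set.mem_iUnion]
        exact ⟨b, hb, hy⟩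
      exact (Set.union_eq_self_of_subset_left hsub2).symm
  

lemma coset_decomp {S U : Set F} (hSc : IsCompact S) (h0S : (0:F) ∉ S) (hU : IsMulSub U)
    (hUo : IsOpen U) (hstab : ∀ u ∈ U, mset u S = S) :
    ∃ t : Finset F, (∀ a ∈ t, a ∈ S) ∧ (S = ⋃ a ∈ t, mset a U) ∧
      (t : Set F).Pairwise fun a b => Disjoint (mset a U) (mset b U) := by
  classical
  have hmsub : ∀ a ∈ S, mset a U ⊆ S := by
    rintro a ha y ⟨u, hu, rfl⟩
    have : u * a ∈ mset u S := ⟨a, ha, rfl⟩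
    rw [hstab u hu] at this
    rwa [mul_comm] at this
  have hcover : S ⊆ ⋃ a : S, mset (a : F) U := by
    intro x hx
    simp only [Set.mem_iUnion]
    exact ⟨⟨x, hx⟩, self_mem_mset hU.one_mem⟩
  obtain ⟨t₀, ht₀⟩ := hSc.elim_finite_subcover (fun a : S => mset (a : F) U)
    (fun a => mset_isOpen (fun h => h0S (h ▸ a.2)) hUo) hcover
  set t₁ : Finset F := t₀.image Subtype.val with ht₁def
  have hne : ∀ a ∈ t₁, a ≠ (0:F) := by
    intro a ha
    simp only [ht₁def, Finset.mem_image] at ha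
    obtain ⟨⟨b, hb⟩, -, rfl⟩ := ha
    exact fun h => h0S (h ▸ hb)
  obtain ⟨t', ht'sub, ht'cov, ht'disj⟩ := dedupe hU t₁ hne
  have htS : ∀ a ∈ t', a ∈ S := by
    intro a ha
    have := ht'sub ha
    simp only [ht₁def, Finset.mem_image] at this
    obtain ⟨⟨b, hb⟩, -, rfl⟩ := this
    exact hb
  refine ⟨t', htS, ?_, ht'disj⟩
  apply Set.Subset.antisymm
  · intro x hx
    have := ht₀ hx
    simp only [Set.mem_iUnion] at this
    obtain ⟨a, ha, hxa⟩ := this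
    rw [ht'cov]
    simp only [Set.mem_iUnion]
    exact ⟨(a : F), Finset.mem_image_of_mem _ ha, hxa⟩
  · intro x hx
    simp only [Set.mem_iUnion] at hx
    obtain ⟨a, ha, hxa⟩ := hx
    exact hmsub a (htS a ha) hxa

lemma sum_ind {ι : Type} (t : Finset ι) (V : ι → Set F)
    (hd : (t : Set ι).Pairwise fun i j => Disjoint (V i) (V j)) (x : F) :
    (∑ i ∈ t, ind (V i) x) = ind (⋃ i ∈ t, V i) x := by
  classical
  by_cases hx : x ∈ ⋃ i ∈ t, V i
  · rw [ind_of_mem hx]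
    simp only [Set.mem_iUnion] at hx
    obtain ⟨i, hi, hxi⟩ := hx
    rw [Finset.sum_eq_single_of_mem i hi]
    · exact ind_of_mem hxi
    · intro j hj hji
      apply ind_of_not_mem
      intro hxj
      exact Set.disjoint_left.mp (hd hj hi hji) hxj hxi
  · rw [ind_of_not_mem hx]
    apply Finset.sum_eq_zero
    intro i hi
    apply ind_of_not_mem
    intro hxi
    apply hx
    simp only [Set.mem_iUnion]
    exact ⟨i, hi, hxi⟩

end Decomp


section PiK

variable [IsTopologicalDivisionRing F] [LocallyCompactSpace F] [TotallyDisconnectedSpace F]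

lemma exists_ne_zero_mem (hF : ¬ DiscreteTopology F) {W : Set F} (hW : IsOpen W)
    (h0 : (0:F) ∈ W) : ∃ q ∈ W, q ≠ (0:F) := by
  by_contra h
  push_neg at h
  have : W = {0} := Set.Subset.antisymm (fun x hx => h x hx) (by simpa using h0)
  exact hF (discreteTopology_iff_isOpen_singleton_zero.mpr (this ▸ hW))

lemma exists_piK (hF : ¬ DiscreteTopology F) :
    ∃ (K : Set F) (q k₀ : F), IsClopen K ∧ IsCompact K ∧ (0:F) ∈ K ∧ q ≠ 0 ∧
      mset q K ⊆ K ∧ k₀ ∈ K ∧ k₀ ∉ mset q K := by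
  obtain ⟨K, hKcl, hKc, h0K⟩ := exists_compact_clopen_nhd (F := F)
  obtain ⟨k₀, hk₀K, hk₀ne⟩ := exists_ne_zero_mem hF hKcl.2 h0K
  obtain ⟨V₁, hV₁o, h0V₁, hV₁⟩ := tube_mul hKc hKcl.2 0 (fun k hk => by simpa using h0K)
  obtain ⟨V₂, hV₂o, h0V₂, hV₂⟩ := tube_mul hKc (isOpen_compl_singleton (x := k₀)) 0
    (fun k hk => by simpa using hk₀ne.symm)
  obtain ⟨q, hq, hqne⟩ := exists_ne_zero_mem hF (hV₁o.inter hV₂o) ⟨h0V₁, h0V₂⟩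
  refine ⟨K, q, k₀, hKcl, hKc, h0K, hqne, ?_, hk₀K, ?_⟩
  · rintro x ⟨k, hk, rfl⟩
    exact hV₁ q hq.1 k hk
  · rintro ⟨k, hk, hqk⟩
    exact hV₂ q hq.2 k hk hqk

end PiK

section Xi

variable [IsTopologicalDivisionRing F] [LocallyCompactSpace F] [TotallyDisconnectedSpace F]

variable (ξ : ↥(Schwartz (Cross F)) →ₗ[ℂ] ℂ)

/-- Abbreviation for the invariance hypothesis. -/
def Inv' (ξ : ↥(Schwartz (Cross F)) →ₗ[ℂ] ℂ) : Prop :=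
    ∀ (l : Fˣ) (f f' : ↥(Schwartz (Cross F))),
      (∀ p : Cross F, (f' : Cross F → ℂ) p = (f : Cross F → ℂ) (crossAct l p)) →
      ξ f' = ξ f

lemma indA_act {l : F} (hl : l ≠ 0) (S : Set F) (p : Cross F) :
    indA (mset l S) p = indA S (crossAct (Units.mk0 l hl) p) := by
  show ind (mset l S) p.1.1 = ind S ((Units.mk0 l hl : F)⁻¹ * p.1.1)
  simp only [Units.val_mk0]
  by_cases h : p.1.1 ∈ mset l S
  · rw [ind_of_mem h, ind_of_mem ((mem_mset hl).mp h)]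
  · rw [ind_of_not_mem h, ind_of_not_mem (fun hh => h ((mem_mset hl).mpr hh))]

lemma indB_act {l : F} (hl : l ≠ 0) (T : Set F) (p : Cross F) :
    indB (mset l T) p = indB T (crossAct (Units.mk0 l hl)⁻¹ p) := by
  show ind (mset l T) p.1.2 = ind T ((((Units.mk0 l hl)⁻¹ : Fˣ) : F) * p.1.2)
  have hcoe : (((Units.mk0 l hl)⁻¹ : Fˣ) : F) = l⁻¹ := rfl
  rw [hcoe]
  by_cases h : p.1.2 ∈ mset l T
  · rw [ind_of_mem h, ind_of_mem ((mem_mset hl).mp h)]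
  · rw [ind_of_not_mem h, ind_of_not_mem (fun hh => h ((mem_mset hl).mpr hh))]

lemma xiA_eq (hinv : Inv' ξ) {S T : Set F} (l : F) (hl : l ≠ 0) (hST : S = mset l T)
    (hSmem : indA S ∈ Schwartz (Cross F)) (hTmem : indA T ∈ Schwartz (Cross F)) :
    ξ ⟨indA S, hSmem⟩ = ξ ⟨indA T, hTmem⟩ := by
  apply hinv (Units.mk0 l hl)
  intro p
  show indA S p = indA T (crossAct (Units.mk0 l hl) p)
  rw [hST]
  exact indA_act hl T p

lemma xiB_eq (hinv : Inv' ξ) {S T : Set F} (l : F) (hl : l ≠ 0) (hST : S = mset l T)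
    (hSmem : indB S ∈ Schwartz (Cross F)) (hTmem : indB T ∈ Schwartz (Cross F)) :
    ξ ⟨indB S, hSmem⟩ = ξ ⟨indB T, hTmem⟩ := by
  apply hinv (Units.mk0 l hl)⁻¹
  intro p
  show indB S p = indB T (crossAct (Units.mk0 l hl)⁻¹ p)
  rw [hST]
  exact indB_act hl T p

lemma indK_act {l : F} (hl : l ≠ 0) (S T : Set F) (p : Cross F) :
    indK (mset l S) (mset l⁻¹ T) p = indK S T (crossAct (Units.mk0 l hl) p) := by
  show ind (mset l S) p.1.1 * ind (mset l⁻¹ T) p.1.2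
      = ind S ((Units.mk0 l hl : F)⁻¹ * p.1.1) * ind T ((Units.mk0 l hl : F) * p.1.2)
  simp only [Units.val_mk0]
  have h1 : ind (mset l S) p.1.1 = ind S (l⁻¹ * p.1.1) := by
    by_cases h : p.1.1 ∈ mset l S
    · rw [ind_of_mem h, ind_of_mem ((mem_mset hl).mp h)]
    · rw [ind_of_not_mem h, ind_of_not_mem (fun hh => h ((mem_mset hl).mpr hh))]
  have h2 : ind (mset l⁻¹ T) p.1.2 = ind T (l * p.1.2) := by
    have hli : l⁻¹ ≠ 0 := inv_ne_zero hl
    by_cases h : p.1.2 ∈ mset l⁻¹ T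
    · rw [ind_of_mem h, ind_of_mem (by simpa [inv_inv] using (mem_mset hli).mp h)]
    · rw [ind_of_not_mem h, ind_of_not_mem
        (fun hh => h ((mem_mset hli).mpr (by simpa [inv_inv] using hh)))]
  rw [h1, h2]

lemma xiK_eq (hinv : Inv' ξ) {S T : Set F} (l : F) (hl : l ≠ 0)
    (hmem : indK (mset l S) (mset l⁻¹ T) ∈ Schwartz (Cross F))
    (hmem' : indK S T ∈ Schwartz (Cross F)) :
    ξ ⟨indK (mset l S) (mset l⁻¹ T), hmem⟩ = ξ ⟨indK S T, hmem'⟩ := by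
  apply hinv (Units.mk0 l hl)
  intro p
  exact indK_act hl S T p


lemma link (hinv : Inv' ξ) {K : Set F} (hKcl : IsClopen K) (hKc : IsCompact K)
    (h0K : (0:F) ∈ K) {q : F} (hq : q ≠ 0) (hqK : mset q K ⊆ K)
    (hCA : indA (K \ mset q K) ∈ Schwartz (Cross F))
    (hCB : indB (K \ mset q K) ∈ Schwartz (Cross F)) :
    ξ ⟨indA (K \ mset q K), hCA⟩ = ξ ⟨indB (K \ mset q K), hCB⟩ := by
  set C := K \ mset q K with hCdef
  have hqi : q⁻¹ ≠ 0 := inv_ne_zero hq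
  have hCcl : IsClopen C := by
    rw [hCdef, Set.diff_eq]
    exact ⟨hKcl.1.inter (mset_isOpen hq hKcl.2).isClosed_compl,
      hKcl.2.inter (mset_isClosed hq hKcl.1).isOpen_compl⟩
  have hCc : IsCompact C := hKc.of_isClosed_subset hCcl.1 Set.diff_subset
  have h0C : (0:F) ∉ C := fun h => h.2 ⟨0, h0K, mul_zero q⟩
  have h0qK : (0:F) ∈ mset q K := ⟨0, h0K, mul_zero q⟩
  have h0qiK : (0:F) ∈ mset q⁻¹ K := ⟨0, h0K, mul_zero q⁻¹⟩
  have h0qiC : (0:F) ∉ mset q⁻¹ C := zero_not_mem_mset hqi h0C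
  have hmemq : ∀ y : F, y ∈ mset q⁻¹ K ↔ q * y ∈ K := fun y => by
    rw [mem_mset hqi, inv_inv]
  have hmemqC : ∀ y : F, y ∈ mset q⁻¹ C ↔ q * y ∈ C := fun y => by
    rw [mem_mset hqi, inv_inv]
  have hmemqK : ∀ x : F, x ∈ mset q K ↔ q⁻¹ * x ∈ K := fun x => mem_mset hq
  have hKsub : ∀ y : F, y ∈ K → y ∈ mset q⁻¹ K := by
    intro y hy
    rw [hmemq]
    exact hqK ⟨y, hy, rfl⟩
  have hmem1 : indK K K ∈ Schwartz (Cross F) := indK_mem hKcl hKc hKcl hKc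
  have hmem2 : indK (mset q K) (mset q⁻¹ K) ∈ Schwartz (Cross F) :=
    indK_mem (mset_isClopen hq hKcl) (mset_isCompact hKc)
      (mset_isClopen hqi hKcl) (mset_isCompact hKc)
  have hmemB' : indB (mset q⁻¹ C) ∈ Schwartz (Cross F) :=
    indB_mem (mset_isClopen hqi hCcl) (mset_isCompact hCc) h0qiC
  have step1 : ξ ⟨indK (mset q K) (mset q⁻¹ K), hmem2⟩ = ξ ⟨indK K K, hmem1⟩ :=
    xiK_eq ξ hinv q hq hmem2 hmem1
  have hdiff : (⟨indK K K, hmem1⟩ - ⟨indK (mset q K) (mset q⁻¹ K), hmem2⟩ :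
      ↥(Schwartz (Cross F))) = ⟨indA C, hCA⟩ - ⟨indB (mset q⁻¹ C), hmemB'⟩ := by
    apply Subtype.ext
    show indK K K - indK (mset q K) (mset q⁻¹ K) = indA C - indB (mset q⁻¹ C)
    funext p
    simp only [Pi.sub_apply]
    rcases cross_cases p with h1 | h2
    · -- p.1.1 = 0
      show ind K p.1.1 * ind K p.1.2 - ind (mset q K) p.1.1 * ind (mset q⁻¹ K) p.1.2
        = ind C p.1.1 - ind (mset q⁻¹ C) p.1.2
      rw [h1, ind_of_mem h0K, ind_of_mem h0qK, ind_of_not_mem h0C, one_mul, one_mul,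
        zero_sub]
      by_cases hy : p.1.2 ∈ mset q⁻¹ K
      · by_cases hyK : p.1.2 ∈ K
        · have : p.1.2 ∉ mset q⁻¹ C := by
            rw [hmemqC]
            rintro ⟨-, hcon⟩
            exact hcon ⟨p.1.2, hyK, rfl⟩
          rw [ind_of_mem hy, ind_of_mem hyK, ind_of_not_mem this, sub_self, neg_zero]
        · have : p.1.2 ∈ mset q⁻¹ C := by
            rw [hmemqC]
            refine ⟨(hmemq _).mp hy, ?_⟩
            rintro ⟨k, hk, hqk⟩
            have : p.1.2 = k := mul_left_cancel₀ hq hqk.symm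
            exact hyK (this ▸ hk)
          rw [ind_of_mem hy, ind_of_not_mem hyK, ind_of_mem this, zero_sub]
      · have hyK : p.1.2 ∉ K := fun h => hy (hKsub _ h)
        have : p.1.2 ∉ mset q⁻¹ C := by
          rw [hmemqC]
          rintro ⟨hk, -⟩
          exact hy ((hmemq _).mpr hk)
        rw [ind_of_not_mem hy, ind_of_not_mem hyK, ind_of_not_mem this, sub_self, neg_zero]
    · -- p.1.2 = 0
      show ind K p.1.1 * ind K p.1.2 - ind (mset q K) p.1.1 * ind (mset q⁻¹ K) p.1.2
        = ind C p.1.1 - ind (mset q⁻¹ C) p.1.2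
      rw [h2, ind_of_mem h0K, ind_of_mem h0qiK, ind_of_not_mem h0qiC, mul_one, mul_one,
        sub_zero]
      by_cases hx : p.1.1 ∈ mset q K
      · have hxK : p.1.1 ∈ K := hqK hx
        have : p.1.1 ∉ C := fun h => h.2 hx
        rw [ind_of_mem hx, ind_of_mem hxK, ind_of_not_mem this, sub_self]
      · by_cases hxK : p.1.1 ∈ K
        · have : p.1.1 ∈ C := ⟨hxK, hx⟩
          rw [ind_of_not_mem hx, ind_of_mem hxK, ind_of_mem this, sub_zero]
        · have : p.1.1 ∉ C := fun h => hxK h.1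
          rw [ind_of_not_mem hx, ind_of_not_mem hxK, ind_of_not_mem this, sub_self]
  have step2 : ξ ⟨indA C, hCA⟩ - ξ ⟨indB (mset q⁻¹ C), hmemB'⟩ = 0 := by
    rw [← map_sub, ← hdiff, map_sub, step1, sub_self]
  have step3 : ξ ⟨indB (mset q⁻¹ C), hmemB'⟩ = ξ ⟨indB C, hCB⟩ :=
    xiB_eq ξ hinv q⁻¹ hqi rfl hmemB' hCB
  rw [← step3]
  exact sub_eq_zero.mp step2


lemma key (hF : ¬ DiscreteTopology F) (hinv : Inv' ξ) {S : Set F} (hScl : IsClopen S)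
    (hSc : IsCompact S) (h0S : (0:F) ∉ S)
    (hmA : indA S ∈ Schwartz (Cross F)) (hmB : indB S ∈ Schwartz (Cross F)) :
    ξ ⟨indA S, hmA⟩ = ξ ⟨indB S, hmB⟩ := by
  classical
  obtain ⟨K, q, k₀, hKcl, hKc, h0K, hq, hqK, hk₀K, hk₀n⟩ := exists_piK (F := F) hF
  set C := K \ mset q K with hCdef
  have hqi : q⁻¹ ≠ 0 := inv_ne_zero hq
  have hCcl : IsClopen C := by
    rw [hCdef, Set.diff_eq]
    exact ⟨hKcl.1.inter (mset_isOpen hq hKcl.2).isClosed_compl,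
      hKcl.2.inter (mset_isClosed hq hKcl.1).isOpen_compl⟩
  have hCc : IsCompact C := hKc.of_isClosed_subset hCcl.1 Set.diff_subset
  have h0C : (0:F) ∉ C := fun h => h.2 ⟨0, h0K, mul_zero q⟩
  obtain ⟨U, hUsub, hUcl, hUc, hUS, hUC⟩ :=
    exists_good_subgroup hF S C hSc hScl.2 hCc hCcl.2
  obtain ⟨tS, htSmem, htScov, htSdisj⟩ := coset_decomp hSc h0S hUsub hUcl.2 hUS
  obtain ⟨tC, htCmem, htCcov, htCdisj⟩ := coset_decomp hCc h0C hUsub hUcl.2 hUC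
  have hk₀C : k₀ ∈ C := ⟨hk₀K, hk₀n⟩
  have hk₀' : k₀ ∈ ⋃ a ∈ tC, mset a U := htCcov ▸ hk₀C
  rw [Set.mem_iUnion₂] at hk₀'
  obtain ⟨b₀, hb₀, -⟩ := hk₀'
  have hb₀C : b₀ ∈ C := htCmem b₀ hb₀
  have hb₀ne : b₀ ≠ 0 := fun h => h0C (h ▸ hb₀C)
  -- coset indicator membership
  have hcosetA : ∀ a : F, a ≠ 0 → indA (mset a U) ∈ Schwartz (Cross F) := fun a ha =>
    indA_mem (mset_isClopen ha hUcl) (mset_isCompact hUc)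
      (zero_not_mem_mset ha hUsub.zero_not_mem)
  have hcosetB : ∀ a : F, a ≠ 0 → indB (mset a U) ∈ Schwartz (Cross F) := fun a ha =>
    indB_mem (mset_isClopen ha hUcl) (mset_isCompact hUc)
      (zero_not_mem_mset ha hUsub.zero_not_mem)
  set vA : ℂ := ξ ⟨indA (mset b₀ U), hcosetA b₀ hb₀ne⟩ with hvA
  set vB : ℂ := ξ ⟨indB (mset b₀ U), hcosetB b₀ hb₀ne⟩ with hvB
  -- generic counting
  have count : ∀ (S' : Set F) (t : Finset F)
      (hmem' : ∀ a ∈ t, a ∈ S') (h0' : (0:F) ∉ S')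
      (hcov : S' = ⋃ a ∈ t, mset a U)
      (hdisj : (t : Set F).Pairwise fun a b => Disjoint (mset a U) (mset b U))
      (hmA' : indA S' ∈ Schwartz (Cross F)) (hmB' : indB S' ∈ Schwartz (Cross F)),
      ξ ⟨indA S', hmA'⟩ = (t.card : ℂ) * vA ∧ ξ ⟨indB S', hmB'⟩ = (t.card : ℂ) * vB := by
    intro S' t hmem' h0' hcov hdisj hmA' hmB'
    have hne : ∀ a : {x // x ∈ t}, (a : F) ≠ 0 := fun a h => h0' (h ▸ hmem' a.1 a.2)
    have hunion : ∀ x : F, (x ∈ ⋃ a ∈ t.attach, mset (a : F) U) ↔ x ∈ S' := by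
      intro x
      rw [hcov]
      simp only [Set.mem_iUnion]
      constructor
      · rintro ⟨a, -, hx⟩
        exact ⟨a.1, ⟨a.2, hx⟩⟩
      · rintro ⟨a, ha, hx⟩
        exact ⟨⟨a, ha⟩, ⟨Finset.mem_attach t _, hx⟩⟩
    have hdisj' : (t.attach : Set {x // x ∈ t}).Pairwise
        fun a b => Disjoint (mset (a : F) U) (mset (b : F) U) := by
      intro a _ b _ hab
      exact hdisj a.2 b.2 (fun h => hab (Subtype.ext h))
    constructor
    · have hsum : (⟨indA S', hmA'⟩ : ↥(Schwartz (Cross F)))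
          = ∑ a ∈ t.attach, ⟨indA (mset (a : F) U), hcosetA _ (hne a)⟩ := by
        apply Subtype.ext
        rw [Submodule.coe_sum]
        funext p
        rw [Finset.sum_apply]
        show indA S' p = ∑ a ∈ t.attach, ind (mset (a : F) U) p.1.1
        rw [sum_ind t.attach _ hdisj' p.1.1]
        show ind S' p.1.1 = ind _ p.1.1
        by_cases h : p.1.1 ∈ S'
        · rw [ind_of_mem h, ind_of_mem ((hunion _).mpr h)]
        · rw [ind_of_not_mem h, ind_of_not_mem (fun hh => h ((hunion _).mp hh))]
      rw [hsum, map_sum]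
      have : ∀ a ∈ t.attach, ξ ⟨indA (mset (a : F) U), hcosetA _ (hne a)⟩ = vA := by
        intro a _
        apply xiA_eq ξ hinv ((a : F) * b₀⁻¹) (mul_ne_zero (hne a) (inv_ne_zero hb₀ne))
        rw [mset_mset, mul_assoc, inv_mul_cancel₀ hb₀ne, mul_one]
      rw [Finset.sum_congr rfl this, Finset.sum_const, Finset.card_attach, nsmul_eq_mul]
    · have hsum : (⟨indB S', hmB'⟩ : ↥(Schwartz (Cross F)))
          = ∑ a ∈ t.attach, ⟨indB (mset (a : F) U), hcosetB _ (hne a)⟩ := by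
        apply Subtype.ext
        rw [Submodule.coe_sum]
        funext p
        rw [Finset.sum_apply]
        show indB S' p = ∑ a ∈ t.attach, ind (mset (a : F) U) p.1.2
        rw [sum_ind t.attach _ hdisj' p.1.2]
        show ind S' p.1.2 = ind _ p.1.2
        by_cases h : p.1.2 ∈ S'
        · rw [ind_of_mem h, ind_of_mem ((hunion _).mpr h)]
        · rw [ind_of_not_mem h, ind_of_not_mem (fun hh => h ((hunion _).mp hh))]
      rw [hsum, map_sum]
      have : ∀ a ∈ t.attach, ξ ⟨indB (mset (a : F) U), hcosetB _ (hne a)⟩ = vB := by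
        intro a _
        apply xiB_eq ξ hinv ((a : F) * b₀⁻¹) (mul_ne_zero (hne a) (inv_ne_zero hb₀ne))
        rw [mset_mset, mul_assoc, inv_mul_cancel₀ hb₀ne, mul_one]
      rw [Finset.sum_congr rfl this, Finset.sum_const, Finset.card_attach, nsmul_eq_mul]
  obtain ⟨hAS, hBS⟩ := count S tS htSmem h0S htScov htSdisj hmA hmB
  have hmAC : indA C ∈ Schwartz (Cross F) := indA_mem hCcl hCc h0C
  have hmBC : indB C ∈ Schwartz (Cross F) := indB_mem hCcl hCc h0C
  obtain ⟨hAC, hBC⟩ := count C tC htCmem h0C htCcov htCdisj hmAC hmBC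
  have hlink : ξ ⟨indA C, hmAC⟩ = ξ ⟨indB C, hmBC⟩ :=
    link ξ hinv hKcl hKc h0K hq hqK hmAC hmBC
  rw [hAC, hBC] at hlink
  have hcard : (tC.card : ℂ) ≠ 0 :=
    Nat.cast_ne_zero.mpr (Finset.card_ne_zero_of_mem hb₀)
  have hv : vA = vB := mul_left_cancel₀ hcard hlink
  rw [hAS, hBS, hv]

end Xi

end CrossAux

open CrossAux in
/-- Over a non-Archimedean local field `F`, every
`Fˣ`-invariant distribution on the cross `{xy = 0}` is invariant under the swap. -/
theorem cross_dist_swap_invariant (F : Type) [Field F] [TopologicalSpace F]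
    [IsTopologicalDivisionRing F] [LocallyCompactSpace F] [T2Space F]
    [TotallyDisconnectedSpace F] (hF : ¬ DiscreteTopology F)
    (ξ : ↥(Schwartz (Cross F)) →ₗ[ℂ] ℂ)
    (hinv : ∀ (l : Fˣ) (f f' : ↥(Schwartz (Cross F))),
      (∀ p : Cross F, (f' : Cross F → ℂ) p = (f : Cross F → ℂ) (crossAct l p)) →
      ξ f' = ξ f) :
    ∀ (f f' : ↥(Schwartz (Cross F))),
      (∀ p : Cross F, (f' : Cross F → ℂ) p = (f : Cross F → ℂ) (crossSwap p)) →
      ξ f' = ξ f := by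
  classical
  intro f f' hswap
  have hinv' : Inv' ξ := hinv
  set g : ↥(Schwartz (Cross F)) := f' - f with hgdef
  have hgcoe : ∀ p, (g : Cross F → ℂ) p = (f' : Cross F → ℂ) p - (f : Cross F → ℂ) p :=
    fun p => rfl
  have hswap2 : ∀ p : Cross F, crossSwap (crossSwap p) = p := fun p => Subtype.ext rfl
  have hanti : ∀ p, (g : Cross F → ℂ) (crossSwap p) = -((g : Cross F → ℂ) p) := by
    intro p
    rw [hgcoe, hgcoe, hswap p, hswap (crossSwap p), hswap2]
    ring
  set h : F → ℂ := fun x => (g : Cross F → ℂ) (eA x) with hhdef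
  have hg2 : IsLocallyConstant (g : Cross F → ℂ) ∧ HasCompactSupport (g : Cross F → ℂ) :=
    g.2
  have h0 : h 0 = 0 := by
    have h00 : crossSwap (eA (0:F)) = eA 0 := Subtype.ext rfl
    have hx := hanti (eA (0:F))
    rw [h00] at hx
    exact CharZero.eq_neg_self_iff.mp hx
  have hloc : IsLocallyConstant h := hg2.1.comp_continuous continuous_eA
  have himg : IsCompact ((fun pp : Cross F => pp.1.1) '' (tsupport (g : Cross F → ℂ))) :=
    hg2.2.image continuous_c1
  have hsupp : Function.support h ⊆
      (fun pp : Cross F => pp.1.1) '' (tsupport (g : Cross F → ℂ)) := by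
    intro x hx
    exact ⟨eA x, subset_closure hx, rfl⟩
  have htsupp : IsCompact (tsupport h) :=
    himg.of_isClosed_subset isClosed_closure (closure_minimal hsupp himg.isClosed)
  haveI : CompactSpace (tsupport h) := isCompact_iff_compactSpace.mp htsupp
  have hfin : (h '' (tsupport h)).Finite := by
    rw [Set.image_eq_range]
    exact (hloc.comp_continuous continuous_subtype_val).range_finite
  set T : Finset ℂ := hfin.toFinset.erase 0 with hTdef
  set Sc : ℂ → Set F := fun c => h ⁻¹' {c} with hScdef
  have hScmem : ∀ c x, x ∈ Sc c ↔ h x = c := fun c x => Iff.rfl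
  have hScopen : ∀ c, IsOpen (Sc c) := fun c => hloc {c}
  have hScclosed : ∀ c, IsClosed (Sc c) := by
    intro c
    have hx := hloc ({c}ᶜ)
    rw [Set.preimage_compl] at hx
    exact isOpen_compl_iff.mp hx
  have hTne : ∀ c ∈ T, c ≠ 0 := fun c hc => Finset.ne_of_mem_erase hc
  have hScsub : ∀ c ∈ T, Sc c ⊆ tsupport h := by
    intro c hc x hx
    apply subset_closure
    show h x ≠ 0
    rw [(hScmem c x).mp hx]
    exact hTne c hc
  have hSccomp : ∀ c ∈ T, IsCompact (Sc c) :=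
    fun c hc => htsupp.of_isClosed_subset (hScclosed c) (hScsub c hc)
  have h0Sc : ∀ c ∈ T, (0:F) ∉ Sc c := by
    intro c hc hx
    exact hTne c hc (((hScmem c 0).mp hx).symm.trans h0)
  have hsum : ∀ x : F, h x = ∑ c ∈ T, c * ind (Sc c) x := by
    intro x
    by_cases hx : h x = 0
    · rw [hx]
      symm
      apply Finset.sum_eq_zero
      intro c hc
      have hnm : x ∉ Sc c := fun hmem => hTne c hc (((hScmem c x).mp hmem).symm.trans hx)
      rw [ind_of_not_mem hnm, mul_zero]
    · have hxT : h x ∈ T := by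
        rw [hTdef, Finset.mem_erase]
        refine ⟨hx, ?_⟩
        rw [Set.Finite.mem_toFinset]
        exact ⟨x, subset_closure hx, rfl⟩
      rw [Finset.sum_eq_single_of_mem (h x) hxT]
      · rw [ind_of_mem ((hScmem (h x) x).mpr rfl), mul_one]
      · intro c hc hne
        rw [ind_of_not_mem (fun hmem => hne ((hScmem c x).mp hmem ▸ rfl)), mul_zero]
  have hgval : ∀ p : Cross F, (g : Cross F → ℂ) p = h p.1.1 - h p.1.2 := by
    intro p
    rcases cross_cases p with h1 | h2
    · have hp : p = eB p.1.2 := eq_eB p h1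
      have hbe : eB p.1.2 = crossSwap (eA p.1.2) := Subtype.ext rfl
      rw [h1, h0, zero_sub]
      calc (g : Cross F → ℂ) p = (g : Cross F → ℂ) (crossSwap (eA p.1.2)) := by
            rw [← hbe, ← hp]
        _ = -((g : Cross F → ℂ) (eA p.1.2)) := hanti _
        _ = -(h p.1.2) := rfl
    · have hp : p = eA p.1.1 := eq_eA p h2
      rw [h2, h0, sub_zero]
      conv_lhs => rw [hp]
  -- membership of the fiber indicators
  have hmAc : ∀ c : {c // c ∈ T}, indA (Sc c.1) ∈ Schwartz (Cross F) := fun c =>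
    indA_mem ⟨hScclosed c.1, hScopen c.1⟩ (hSccomp c.1 c.2) (h0Sc c.1 c.2)
  have hmBc : ∀ c : {c // c ∈ T}, indB (Sc c.1) ∈ Schwartz (Cross F) := fun c =>
    indB_mem ⟨hScclosed c.1, hScopen c.1⟩ (hSccomp c.1 c.2) (h0Sc c.1 c.2)
  have hgsum : g = ∑ c ∈ T.attach,
      c.1 • ((⟨indA (Sc c.1), hmAc c⟩ : ↥(Schwartz (Cross F))) - ⟨indB (Sc c.1), hmBc c⟩) := by
    apply Subtype.ext
    rw [Submodule.coe_sum]
    funext p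
    rw [Finset.sum_apply]
    have hterm : ∀ c : {c // c ∈ T},
        ((c.1 • ((⟨indA (Sc c.1), hmAc c⟩ : ↥(Schwartz (Cross F))) - ⟨indB (Sc c.1), hmBc c⟩) :
          ↥(Schwartz (Cross F))) : Cross F → ℂ) p
          = c.1 * (ind (Sc c.1) p.1.1 - ind (Sc c.1) p.1.2) := fun c => rfl
    calc (g : Cross F → ℂ) p = h p.1.1 - h p.1.2 := hgval p
      _ = (∑ c ∈ T, c * ind (Sc c) p.1.1) - (∑ c ∈ T, c * ind (Sc c) p.1.2) := by
          rw [hsum p.1.1, hsum p.1.2]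
      _ = ∑ c ∈ T, c * (ind (Sc c) p.1.1 - ind (Sc c) p.1.2) := by
          rw [← Finset.sum_sub_distrib]
          exact Finset.sum_congr rfl fun c _ => (mul_sub c _ _).symm
      _ = ∑ c ∈ T.attach, c.1 * (ind (Sc c.1) p.1.1 - ind (Sc c.1) p.1.2) := by
          rw [Finset.sum_attach T (fun c => c * (ind (Sc c) p.1.1 - ind (Sc c) p.1.2))]
      _ = _ := by
          exact (Finset.sum_congr rfl fun c _ => (hterm c)).symm
  have hxi0 : ξ g = 0 := by
    rw [hgsum, map_sum]
    apply Finset.sum_eq_zero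
    intro c _
    rw [map_smul, map_sub,
      key ξ hF hinv' ⟨hScclosed c.1, hScopen c.1⟩ (hSccomp c.1 c.2) (h0Sc c.1 c.2)
        (hmAc c) (hmBc c),
      sub_self, smul_zero]
  have : ξ f' - ξ f = 0 := by
    rw [← map_sub, ← hgdef]
    exact hxi0
  exact sub_eq_zero.mp this
end
end

section
/- Let F be a nontrivially normed field. Then the pair (1, E₁₂) lies in the closure, in M₂(F) × M₂(F) with the product topology, of the set { (λ•(g·h⁻¹), μ•(g·E₁₁·h⁻¹)) : g, h ∈ GL₂(F), λ, μ ∈ Fˣ }; equivalently, the point ([1],[E₁₂]) of ℙ(M₂(F))² lies in the closure of the PGL₂(F)×PGL₂(F)-orbit of ([1],[E₁₁]). -/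
open Matrix Filter

noncomputable section

/-- 2×2 matrices over `F`. -/
abbrev M2 (F : Type) [Field F] := Matrix (Fin 2) (Fin 2) F

/-- The group `GL₂(F)` of invertible 2×2 matrices. -/
abbrev GL2 (F : Type) [Field F] := (M2 F)ˣ

lemma pair_mem_orbit (F : Type) [Field F] {ε : F} (hε : ε ≠ 0) :
    ((1 : M2 F), (!![-ε,1;0,0] : M2 F)) ∈
      {p : M2 F × M2 F | ∃ (g h : GL2 F) (l m : Fˣ),
        p = ((l : F) • ((g : M2 F) * ((h⁻¹ : GL2 F) : M2 F)),
             (m : F) • ((g : M2 F) * !![1,0;0,0] * ((h⁻¹ : GL2 F) : M2 F)))} := by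
  have hinv : (!![1,1;0,ε] : M2 F) * !![1,-ε⁻¹;0,ε⁻¹] = 1 := by
    ext i j
    fin_cases i <;> fin_cases j <;>
      simp [Matrix.mul_apply, Fin.sum_univ_two, hε, Matrix.one_apply]
  have hinv2 : (!![1,-ε⁻¹;0,ε⁻¹] : M2 F) * !![1,1;0,ε] = 1 := by
    ext i j
    fin_cases i <;> fin_cases j <;>
      simp [Matrix.mul_apply, Fin.sum_univ_two, inv_mul_cancel₀ hε, Matrix.one_apply]
  set g : GL2 F := ⟨!![1,1;0,ε], !![1,-ε⁻¹;0,ε⁻¹], hinv, hinv2⟩ with hg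
  refine ⟨g, g, 1, Units.mk0 (-ε) (neg_ne_zero.2 hε), ?_⟩
  have hco : ((g⁻¹ : GL2 F) : M2 F) = !![1,-ε⁻¹;0,ε⁻¹] := rfl
  refine Prod.ext ?_ ?_
  · simp only [Units.val_one, one_smul, hco, hg]
    exact (hinv).symm
  · simp only [hco, Units.val_mk0]; simp only [hg]
    ext i j
    fin_cases i <;> fin_cases j <;>
      simp [Matrix.mul_apply, Fin.sum_univ_two, Matrix.smul_apply, hε] <;> field_simp

/-- Over a nontrivially normed field `F`, the pair `(1, E₁₂)` lies in
the closure of the set of pairs `(λ•(g·h⁻¹), μ•(g·E₁₁·h⁻¹))` with `g, h ∈ GL₂(F)` and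
`λ, μ ∈ Fˣ`; i.e. `([1],[E₁₂])` lies in the closure of the `PGL₂×PGL₂`-orbit of
`([1],[E₁₁])`. -/
theorem pair_one_E12_mem_closure_orbit (F : Type) [NontriviallyNormedField F] :
    ((1 : M2 F), (!![0,1;0,0] : M2 F)) ∈ closure
      {p : M2 F × M2 F | ∃ (g h : GL2 F) (l m : Fˣ),
        p = ((l : F) • ((g : M2 F) * ((h⁻¹ : GL2 F) : M2 F)),
             (m : F) • ((g : M2 F) * !![1,0;0,0] * ((h⁻¹ : GL2 F) : M2 F)))} := by
  obtain ⟨y, hy0, hy1⟩ := NormedField.exists_norm_lt_one F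
  have hyne : y ≠ 0 := by
    intro h; rw [h] at hy0; simp at hy0
  have h1 : Tendsto (fun n : ℕ => (y ^ n : F)) atTop (nhds 0) :=
    tendsto_pow_atTop_nhds_zero_of_norm_lt_one hy1
  have hcont : Continuous fun t : F => (!![-t,1;0,0] : M2 F) := by
    have : (fun t : F => (!![-t,1;0,0] : M2 F))
        = fun t : F => t • (!![-1,0;0,0] : M2 F) + !![0,1;0,0] := by
      funext t
      ext i j
      fin_cases i <;> fin_cases j <;> simp
    rw [this]
    exact (continuous_id.smul continuous_const).add continuous_const
  have hmat : Tendsto (fun n : ℕ => (!![-(y^n),1;0,0] : M2 F)) atTop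
      (nhds (!![0,1;0,0] : M2 F)) := by
    have := hcont.continuousAt (x := (0 : F)) |>.tendsto.comp h1
    simpa [Function.comp_def] using this
  refine mem_closure_of_tendsto
    (Tendsto.prodMk_nhds (tendsto_const_nhds) hmat) ?_
  exact Eventually.of_forall fun n => pair_mem_orbit F (pow_ne_zero n hyne)
end
end

section
/- Let F be a field and let y ∈ M₂(F) be a nonzero matrix with det y = 0. Then there exist invertible upper triangular matrices b₁, b₂ ∈ GL₂(F) such that b₁·y·b₂⁻¹ is equal to one of the four matrix units E₁₁, E₁₂, E₂₁, E₂₂. Moreover, for all invertible upper triangular b₁, b₂ ∈ GL₂(F) and all λ ∈ Fˣ, b₁·E₁₂·b₂⁻¹ ≠ λ•E₂₁. -/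
open Matrix

noncomputable section

/-- Every nonzero singular 2×2 matrix can be brought to one of the
four matrix units by multiplying on both sides by invertible upper triangular matrices;
moreover `b₁·E₁₂·b₂⁻¹` is never a scalar multiple of `E₂₁` for upper triangular
`b₁, b₂`. -/
theorem borel_orbits_of_singular (F : Type) [Field F] :
    (∀ y : M2 F, y ≠ 0 → y.det = 0 →
      ∃ b₁ b₂ : GL2 F, (b₁ : M2 F) 1 0 = 0 ∧ (b₂ : M2 F) 1 0 = 0 ∧
        ((b₁ : M2 F) * y * ((b₂⁻¹ : GL2 F) : M2 F) = !![1,0;0,0] ∨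
         (b₁ : M2 F) * y * ((b₂⁻¹ : GL2 F) : M2 F) = !![0,1;0,0] ∨
         (b₁ : M2 F) * y * ((b₂⁻¹ : GL2 F) : M2 F) = !![0,0;1,0] ∨
         (b₁ : M2 F) * y * ((b₂⁻¹ : GL2 F) : M2 F) = !![0,0;0,1])) ∧
    (∀ b₁ b₂ : GL2 F, (b₁ : M2 F) 1 0 = 0 → (b₂ : M2 F) 1 0 = 0 → ∀ l : Fˣ,
      (b₁ : M2 F) * !![0,1;0,0] * ((b₂⁻¹ : GL2 F) : M2 F) ≠ (l : F) • !![0,0;1,0]) := by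
  constructor
  · intro y hy hdet
    set a := y 0 0 with ha
    set b := y 0 1 with hb
    set c := y 1 0 with hc0
    set d := y 1 1 with hd0
    have hy2 : y = !![a, b; c, d] := by
      ext i j; fin_cases i <;> fin_cases j <;> rfl
    have hdet2 : a * d - b * c = 0 := by
      rw [ha, hb, hc0, hd0, ← Matrix.det_fin_two]; exact hdet
    by_cases hc : c ≠ 0
    · have e1 : !![1, -a*c⁻¹; (0:F), 1] * !![1, a*c⁻¹; 0, 1] = 1 := by
        rw [Matrix.mul_fin_two]; ext i j; fin_cases i <;> fin_cases j <;> simp <;> field_simp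
      have e2 : !![1, a*c⁻¹; (0:F), 1] * !![1, -a*c⁻¹; 0, 1] = 1 := by
        rw [Matrix.mul_fin_two]; ext i j; fin_cases i <;> fin_cases j <;> simp <;> field_simp
      have e3 : !![c, d; (0:F), 1] * !![c⁻¹, -d*c⁻¹; 0, 1] = 1 := by
        rw [Matrix.mul_fin_two]; ext i j; fin_cases i <;> fin_cases j <;> simp <;> field_simp <;> ring1
      have e4 : !![c⁻¹, -d*c⁻¹; (0:F), 1] * !![c, d; 0, 1] = 1 := by
        rw [Matrix.mul_fin_two]; ext i j; fin_cases i <;> fin_cases j <;> simp <;> field_simp <;> ring1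
      refine ⟨⟨_, _, e1, e2⟩, ⟨_, _, e3, e4⟩, by simp, by simp,
        Or.inr (Or.inr (Or.inl ?_))⟩
      show !![1, -a*c⁻¹; 0, 1] * y * !![c⁻¹, -d*c⁻¹; 0, 1] = _
      rw [hy2, Matrix.mul_fin_two, Matrix.mul_fin_two]
      ext i j
      fin_cases i <;> fin_cases j <;> simp <;> field_simp <;>
        first
          | ring1
          | linear_combination (-(1:F)-d) * hdet2
          | linear_combination (-d) * hdet2
          | linear_combination -hdet2
          | linear_combination hdet2
          | simp
    · push_neg at hc
      by_cases hd : d ≠ 0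
      · have ha0 : a = 0 := by
          have h : a * d = 0 := by rw [← hdet2, hc]; ring
          exact (mul_eq_zero.mp h).resolve_right hd
        have e1 : !![1, -b*d⁻¹; (0:F), 1] * !![1, b*d⁻¹; 0, 1] = 1 := by
          rw [Matrix.mul_fin_two]; ext i j; fin_cases i <;> fin_cases j <;> simp <;> field_simp
        have e2 : !![1, b*d⁻¹; (0:F), 1] * !![1, -b*d⁻¹; 0, 1] = 1 := by
          rw [Matrix.mul_fin_two]; ext i j; fin_cases i <;> fin_cases j <;> simp <;> field_simp
        have e3 : !![(1:F), 0; 0, d] * !![1, 0; 0, d⁻¹] = 1 := by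
          rw [Matrix.mul_fin_two]; ext i j; fin_cases i <;> fin_cases j <;> simp <;> field_simp
        have e4 : !![(1:F), 0; 0, d⁻¹] * !![1, 0; 0, d] = 1 := by
          rw [Matrix.mul_fin_two]; ext i j; fin_cases i <;> fin_cases j <;> simp <;> field_simp
        refine ⟨⟨_, _, e1, e2⟩, ⟨_, _, e3, e4⟩, by simp, by simp,
          Or.inr (Or.inr (Or.inr ?_))⟩
        show !![1, -b*d⁻¹; 0, 1] * y * !![1, 0; 0, d⁻¹] = _
        rw [hy2, hc, ha0, Matrix.mul_fin_two, Matrix.mul_fin_two]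
        ext i j
        fin_cases i <;> fin_cases j <;> simp <;> field_simp <;> simp
      · push_neg at hd
        by_cases hA : a ≠ 0
        · have e3 : !![a, b; (0:F), 1] * !![a⁻¹, -b*a⁻¹; 0, 1] = 1 := by
            rw [Matrix.mul_fin_two]; ext i j; fin_cases i <;> fin_cases j <;> simp <;> field_simp <;> ring1
          have e4 : !![a⁻¹, -b*a⁻¹; (0:F), 1] * !![a, b; 0, 1] = 1 := by
            rw [Matrix.mul_fin_two]; ext i j; fin_cases i <;> fin_cases j <;> simp <;> field_simp <;> ring1
          refine ⟨1, ⟨_, _, e3, e4⟩, by simp, by simp, Or.inl ?_⟩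
          show (1 : M2 F) * y * !![a⁻¹, -b*a⁻¹; 0, 1] = _
          rw [one_mul, hy2, hc, hd, Matrix.mul_fin_two]
          ext i j
          fin_cases i <;> fin_cases j <;> simp <;> field_simp <;> ring1
        · push_neg at hA
          have hB : b ≠ 0 := by
            intro hB
            apply hy
            rw [hy2, hA, hB, hc, hd]
            ext i j; fin_cases i <;> fin_cases j <;> simp
          have e3 : !![(1:F), 0; 0, b] * !![1, 0; 0, b⁻¹] = 1 := by
            rw [Matrix.mul_fin_two]; ext i j; fin_cases i <;> fin_cases j <;> simp <;> field_simp
          have e4 : !![(1:F), 0; 0, b⁻¹] * !![1, 0; 0, b] = 1 := by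
            rw [Matrix.mul_fin_two]; ext i j; fin_cases i <;> fin_cases j <;> simp <;> field_simp
          refine ⟨1, ⟨_, _, e3, e4⟩, by simp, by simp, Or.inr (Or.inl ?_)⟩
          show (1 : M2 F) * y * !![1, 0; 0, b⁻¹] = _
          rw [one_mul, hy2, hc, hd, hA, Matrix.mul_fin_two]
          ext i j
          fin_cases i <;> fin_cases j <;> simp <;> field_simp
  · intro b₁ b₂ h1 h2 l heq
    have h := congrFun (congrFun heq 1) 0
    simp [Matrix.mul_apply, Fin.sum_univ_two, h1] at h
    exact l.ne_zero h.symm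
end
end

section
/- Let F be a field and let x, y ∈ M₂(F) be nonzero matrices such that det x = 0 or det y = 0. Then there exist g, h ∈ GL₂(F), λ, μ ∈ Fˣ, and a pair (r₁, r₂) from the list (1,E₁₁), (1,E₁₂), (E₁₂,E₁₁), (E₁₂,E₁₂), (E₁₂,E₂₁), (E₁₂,E₂₂), such that either (g·x·h⁻¹, g·y·h⁻¹) = (λ•r₁, μ•r₂) or (g·y·h⁻¹, g·x·h⁻¹) = (λ•r₁, μ•r₂). Moreover, the six listed pairs lie in pairwise distinct equivalence classes under these operations (simultaneous left/right multiplication by GL₂(F), independent scalar rescaling of each entry, and swapping the two entries). -/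
open Matrix

noncomputable section

/-- Two pairs of matrices are equivalent if one is obtained from the other by
simultaneous left/right multiplication by elements of `GL₂(F)`, independent scalar
rescaling of each entry, and possibly swapping the two entries. -/
def pairEquiv (F : Type) [Field F] (p q : M2 F × M2 F) : Prop :=
  ∃ (g h : GL2 F) (l m : Fˣ),
    ((g : M2 F) * p.1 * ((h⁻¹ : GL2 F) : M2 F) = (l : F) • q.1 ∧
      (g : M2 F) * p.2 * ((h⁻¹ : GL2 F) : M2 F) = (m : F) • q.2) ∨
    ((g : M2 F) * p.2 * ((h⁻¹ : GL2 F) : M2 F) = (l : F) • q.1 ∧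
      (g : M2 F) * p.1 * ((h⁻¹ : GL2 F) : M2 F) = (m : F) • q.2)

/-- The six representatives `(1,E₁₁), (1,E₁₂), (E₁₂,E₁₁), (E₁₂,E₁₂), (E₁₂,E₂₁),
(E₁₂,E₂₂)`. -/
def orbitReps (F : Type) [Field F] : List (M2 F × M2 F) :=
  [(1, !![1,0;0,0]), (1, !![0,1;0,0]), (!![0,1;0,0], !![1,0;0,0]),
   (!![0,1;0,0], !![0,1;0,0]), (!![0,1;0,0], !![0,0;1,0]), (!![0,1;0,0], !![0,0;0,1])]

section Aux
variable {F : Type} [Field F]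

def mk2 (A B : M2 F) (h1 : A * B = 1) (h2 : B * A = 1) : GL2 F := ⟨A, B, h1, h2⟩

@[simp] lemma mk2_coe (A B : M2 F) (h1 h2) : ((mk2 A B h1 h2 : GL2 F) : M2 F) = A := rfl
@[simp] lemma mk2_inv_coe (A B : M2 F) (h1 h2) : (((mk2 A B h1 h2)⁻¹ : GL2 F) : M2 F) = B := rfl

lemma mul_vecMulVec (A : M2 F) (u v : Fin 2 → F) :
    A * vecMulVec u v = vecMulVec (A.mulVec u) v := by
  ext i j
  simp [vecMulVec_apply, Matrix.mul_apply, Matrix.mulVec, dotProduct, Finset.sum_mul, mul_assoc]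
  fin_cases i <;> fin_cases j <;> simp <;> ring

lemma vecMulVec_mul (A : M2 F) (u v : Fin 2 → F) :
    vecMulVec u v * A = vecMulVec u (vecMul v A) := by
  ext i j
  simp [vecMulVec_apply, Matrix.mul_apply, Matrix.vecMul, dotProduct, Finset.mul_sum, mul_assoc]
  fin_cases i <;> fin_cases j <;> simp <;> ring

lemma rank1_decomp {x : M2 F} (hx : x ≠ 0) (hdet : x.det = 0) :
    ∃ u v : Fin 2 → F, u ≠ 0 ∧ v ≠ 0 ∧ x = vecMulVec u v := by
  rw [Matrix.det_fin_two, sub_eq_zero] at hdet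
  by_cases ha : x 0 0 ≠ 0
  · refine ⟨![x 0 0, x 1 0], ![1, x 0 1 / x 0 0], ?_, ?_, ?_⟩
    · intro h; exact ha (by simpa using congrFun h 0)
    · intro h; simpa using congrFun h 0
    · ext i j
      fin_cases i <;> fin_cases j <;> simp [vecMulVec_apply] <;> field_simp <;>
        linear_combination hdet
  · push_neg at ha
    by_cases hb : x 0 1 ≠ 0
    · have hc : x 1 0 = 0 := by
        have h2 : x 0 1 * x 1 0 = 0 := by rw [← hdet, ha, zero_mul]
        exact (mul_eq_zero.mp h2).resolve_left hb
      refine ⟨![x 0 1, x 1 1], ![0, 1], ?_, ?_, ?_⟩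
      · intro h; exact hb (by simpa using congrFun h 0)
      · intro h; simpa using congrFun h 1
      · ext i j; fin_cases i <;> fin_cases j <;> simp [vecMulVec_apply, ha, hc]
    · push_neg at hb
      refine ⟨![0, 1], ![x 1 0, x 1 1], ?_, ?_, ?_⟩
      · intro h; simpa using congrFun h 1
      · intro h
        apply hx
        have h0 := congrFun h 0; have h1 := congrFun h 1
        simp at h0 h1
        ext i j; fin_cases i <;> fin_cases j <;> simp [ha, hb, h0, h1]
      · ext i j; fin_cases i <;> fin_cases j <;> simp [vecMulVec_apply, ha, hb]

lemma mul2 (a b c d e f g h : F) :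
    (!![a,b;c,d] : M2 F) * !![e,f;g,h] = !![a*e+b*g, a*f+b*h; c*e+d*g, c*f+d*h] := by
  ext i j; fin_cases i <;> fin_cases j <;> simp [Matrix.mul_apply, Fin.sum_univ_two]

lemma reduce_col {u : Fin 2 → F} (hu : u ≠ 0) :
    ∃ g : GL2 F, (g : M2 F).mulVec u = ![1,0] := by
  by_cases h0 : u 0 ≠ 0
  · refine ⟨mk2 !![(u 0)⁻¹, 0; -(u 1) * (u 0)⁻¹, 1] !![u 0, 0; u 1, 1] ?_ ?_, ?_⟩
    · rw [mul2]; ext i j; fin_cases i <;> fin_cases j <;> simp <;> field_simp <;> ring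
    · rw [mul2]; ext i j; fin_cases i <;> fin_cases j <;> simp <;> field_simp
    · ext i; fin_cases i <;> simp [Matrix.mulVec, dotProduct, Fin.sum_univ_two] <;> field_simp <;> ring
  · push_neg at h0
    have h1 : u 1 ≠ 0 := by
      intro h1; apply hu; ext i; fin_cases i <;> simp [h0, h1]
    refine ⟨mk2 !![0, (u 1)⁻¹; 1, 0] !![0, 1; u 1, 0] ?_ ?_, ?_⟩
    · rw [mul2]; ext i j; fin_cases i <;> fin_cases j <;> simp <;> field_simp
    · rw [mul2]; ext i j; fin_cases i <;> fin_cases j <;> simp <;> field_simp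
    · ext i; fin_cases i <;> simp [Matrix.mulVec, dotProduct, Fin.sum_univ_two, h0] <;> field_simp

lemma reduce_row {v : Fin 2 → F} (hv : v ≠ 0) :
    ∃ k : GL2 F, vecMul v (k : M2 F) = ![0,1] := by
  by_cases h1 : v 1 ≠ 0
  · refine ⟨mk2 !![1, 0; -(v 0) * (v 1)⁻¹, (v 1)⁻¹] !![1, 0; v 0, v 1] ?_ ?_, ?_⟩
    · rw [mul2]; ext i j; fin_cases i <;> fin_cases j <;> simp <;> field_simp <;> ring
    · rw [mul2]; ext i j; fin_cases i <;> fin_cases j <;> simp <;> (field_simp; try ring)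
    · ext i; fin_cases i <;> simp [Matrix.vecMul, dotProduct, Fin.sum_univ_two] <;> field_simp <;> ring
  · push_neg at h1
    have h0 : v 0 ≠ 0 := by
      intro h0; apply hv; ext i; fin_cases i <;> simp [h0, h1]
    refine ⟨mk2 !![0, (v 0)⁻¹; 1, 0] !![0, 1; v 0, 0] ?_ ?_, ?_⟩
    · rw [mul2]; ext i j; fin_cases i <;> fin_cases j <;> simp <;> field_simp
    · rw [mul2]; ext i j; fin_cases i <;> fin_cases j <;> simp <;> field_simp
    · ext i; fin_cases i <;> simp [Matrix.vecMul, dotProduct, Fin.sum_univ_two, h1] <;> field_simp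

lemma vecMulVec_ne_zero {u v : Fin 2 → F} (hu : u ≠ 0) (hv : v ≠ 0) :
    vecMulVec u v ≠ 0 := by
  obtain ⟨i, hi⟩ : ∃ i, u i ≠ 0 := by
    by_contra h; push_neg at h; exact hu (funext fun i => h i)
  obtain ⟨j, hj⟩ : ∃ j, v j ≠ 0 := by
    by_contra h; push_neg at h; exact hv (funext fun j => h j)
  intro h
  have := congrFun (congrFun h i) j
  simp [vecMulVec_apply] at this
  tauto

lemma conj_rank1 {n : M2 F} (hn : n ≠ 0) (hdet : n.det = 0) :
    ∃ (g : GL2 F) (c : Fˣ),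
      (g : M2 F) * n * ((g⁻¹ : GL2 F) : M2 F) = (c : F) • (!![1,0;0,0] : M2 F) ∨
      (g : M2 F) * n * ((g⁻¹ : GL2 F) : M2 F) = (c : F) • (!![0,1;0,0] : M2 F) := by
  obtain ⟨u, v, hu, hv, rfl⟩ := rank1_decomp hn hdet
  obtain ⟨g₁, hg₁⟩ := reduce_col hu
  set w : Fin 2 → F := vecMul v ((g₁⁻¹ : GL2 F) : M2 F) with hw
  have hkey : (g₁ : M2 F) * vecMulVec u v * ((g₁⁻¹ : GL2 F) : M2 F)
      = vecMulVec ![1,0] w := by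
    rw [_root_.mul_vecMulVec, _root_.vecMulVec_mul, hg₁]
  have hwne : w ≠ 0 := by
    intro h
    apply hv
    have : vecMul w (g₁ : M2 F) = v := by
      rw [hw, vecMul_vecMul, Units.inv_mul, vecMul_one]
    rw [← this, h]
    ext j; simp [Matrix.vecMul, dotProduct]
  by_cases h0 : w 0 = 0
  · have h1 : w 1 ≠ 0 := by
      intro h1; apply hwne; ext i; fin_cases i <;> simp [h0, h1]
    refine ⟨g₁, Units.mk0 (w 1) h1, Or.inr ?_⟩
    rw [hkey]
    ext i j; fin_cases i <;> fin_cases j <;> simp [vecMulVec_apply, h0]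
  · refine ⟨(mk2 !![1, w 1 / w 0; 0, 1] !![1, -(w 1) / w 0; 0, 1] ?_ ?_) * g₁,
      Units.mk0 (w 0) h0, Or.inl ?_⟩
    · rw [mul2]; ext i j; fin_cases i <;> fin_cases j <;> simp <;> (field_simp; try ring)
    · rw [mul2]; ext i j; fin_cases i <;> fin_cases j <;> simp <;> (field_simp; try ring)
    · rw [_root_.mul_inv_rev, Units.val_mul, Units.val_mul, mk2_coe, mk2_inv_coe]
      have assoc : !![1, w 1 / w 0; 0, 1] * (g₁ : M2 F) * vecMulVec u v *
          (((g₁⁻¹ : GL2 F) : M2 F) * !![1, -(w 1) / w 0; 0, 1])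
          = !![1, w 1 / w 0; 0, 1] * ((g₁ : M2 F) * vecMulVec u v * ((g₁⁻¹ : GL2 F) : M2 F))
            * !![1, -(w 1) / w 0; 0, 1] := by
        simp only [mul_assoc]
      rw [assoc, hkey, _root_.mul_vecMulVec, _root_.vecMulVec_mul]
      ext i j
      fin_cases i <;> fin_cases j <;>
        simp [vecMulVec_apply, Matrix.mulVec, Matrix.vecMul, dotProduct,
          Fin.sum_univ_two, Matrix.vecHead, Matrix.vecTail] <;> (try field_simp) <;> (try ring)

lemma sandwich (A B C D : M2 F) (u v : Fin 2 → F) :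
    (A * B) * vecMulVec u v * (C * D)
      = vecMulVec (A.mulVec (B.mulVec u)) (vecMul (vecMul v C) D) := by
  rw [_root_.mul_vecMulVec, _root_.vecMulVec_mul, mulVec_mulVec, vecMul_vecMul]

lemma smul_vecMulVec (a b : F) (u v : Fin 2 → F) :
    vecMulVec (a • u) (b • v) = (a * b) • vecMulVec u v := by
  ext i j; simp [vecMulVec_apply]; ring

lemma stage2_col {u' : Fin 2 → F} (hne : u' ≠ 0) :
    ∃ (g₂ : GL2 F) (α : F), α ≠ 0 ∧ (g₂ : M2 F).mulVec ![1,0] = ![1,0] ∧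
      ((g₂ : M2 F).mulVec u' = α • ![1,0] ∨ (g₂ : M2 F).mulVec u' = α • ![0,1]) := by
  by_cases h1 : u' 1 = 0
  · have h0 : u' 0 ≠ 0 := by
      intro h0; apply hne; ext i; fin_cases i <;> simp [h0, h1]
    refine ⟨1, u' 0, h0, by simp, Or.inl ?_⟩
    simp only [Units.val_one, Matrix.one_mulVec]
    ext i; fin_cases i <;> simp [h1]
  · refine ⟨mk2 !![1, -(u' 0)/(u' 1); 0, 1] !![1, (u' 0)/(u' 1); 0, 1] ?_ ?_,
      u' 1, h1, ?_, Or.inr ?_⟩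
    · rw [mul2]; ext i j; fin_cases i <;> fin_cases j <;> simp <;> (field_simp; try ring)
    · rw [mul2]; ext i j; fin_cases i <;> fin_cases j <;> simp <;> (field_simp; try ring)
    · ext i; fin_cases i <;> simp [Matrix.mulVec, dotProduct, Fin.sum_univ_two]
    · ext i; fin_cases i <;>
        simp [Matrix.mulVec, dotProduct, Fin.sum_univ_two] <;> field_simp <;> ring

lemma stage2_row {v' : Fin 2 → F} (hne : v' ≠ 0) :
    ∃ (k₂ : GL2 F) (β : F), β ≠ 0 ∧ vecMul ![0,1] (k₂ : M2 F) = ![0,1] ∧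
      (vecMul v' (k₂ : M2 F) = β • ![1,0] ∨ vecMul v' (k₂ : M2 F) = β • ![0,1]) := by
  by_cases h0 : v' 0 = 0
  · have h1 : v' 1 ≠ 0 := by
      intro h1; apply hne; ext i; fin_cases i <;> simp [h0, h1]
    refine ⟨1, v' 1, h1, by simp, Or.inr ?_⟩
    simp only [Units.val_one, Matrix.vecMul_one]
    ext i; fin_cases i <;> simp [h0]
  · refine ⟨mk2 !![1, -(v' 1)/(v' 0); 0, 1] !![1, (v' 1)/(v' 0); 0, 1] ?_ ?_,
      v' 0, h0, ?_, Or.inl ?_⟩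
    · rw [mul2]; ext i j; fin_cases i <;> fin_cases j <;> simp <;> (field_simp; try ring)
    · rw [mul2]; ext i j; fin_cases i <;> fin_cases j <;> simp <;> (field_simp; try ring)
    · ext i; fin_cases i <;> simp [Matrix.vecMul, dotProduct, Fin.sum_univ_two]
    · ext i; fin_cases i <;>
        simp [Matrix.vecMul, dotProduct, Fin.sum_univ_two] <;> (try field_simp) <;> ring

/-- the key normalization when both matrices are singular -/
lemma pair_sing {x y : M2 F} (hx : x ≠ 0) (hy : y ≠ 0)
    (hdx : x.det = 0) (hdy : y.det = 0) :
    ∃ r ∈ orbitReps F, ∃ (g h : GL2 F) (l m : Fˣ),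
      (g : M2 F) * x * ((h⁻¹ : GL2 F) : M2 F) = (l : F) • r.1 ∧
      (g : M2 F) * y * ((h⁻¹ : GL2 F) : M2 F) = (m : F) • r.2 := by
  obtain ⟨u₁, v₁, hu₁, hv₁, rfl⟩ := rank1_decomp hx hdx
  obtain ⟨u₂, v₂, hu₂, hv₂, rfl⟩ := rank1_decomp hy hdy
  obtain ⟨g₁, hg₁⟩ := reduce_col hu₁
  obtain ⟨k₁, hk₁⟩ := reduce_row hv₁
  set u' : Fin 2 → F := (g₁ : M2 F).mulVec u₂ with hu'
  set v' : Fin 2 → F := vecMul v₂ (k₁ : M2 F) with hv'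
  have hu'ne : u' ≠ 0 := by
    intro h
    apply hu₂
    have : ((g₁⁻¹ : GL2 F) : M2 F).mulVec u' = u₂ := by
      rw [hu', mulVec_mulVec, Units.inv_mul, Matrix.one_mulVec]
    rw [← this, h, Matrix.mulVec_zero]
  have hv'ne : v' ≠ 0 := by
    intro h
    apply hv₂
    have : vecMul v' ((k₁⁻¹ : GL2 F) : M2 F) = v₂ := by
      rw [hv', vecMul_vecMul, Units.mul_inv, Matrix.vecMul_one]
    rw [← this, h, Matrix.zero_vecMul]
  obtain ⟨g₂, α, hα, hg₂e, hg₂u⟩ := stage2_col hu'ne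
  obtain ⟨k₂, β, hβ, hk₂e, hk₂v⟩ := stage2_row hv'ne
  have image_eq : ∀ (u v : Fin 2 → F),
      ((g₂ * g₁ : GL2 F) : M2 F) * vecMulVec u v * (((((k₁ * k₂)⁻¹)⁻¹ : GL2 F)) : M2 F)
        = vecMulVec ((g₂ : M2 F).mulVec ((g₁ : M2 F).mulVec u))
            (vecMul (vecMul v (k₁ : M2 F)) (k₂ : M2 F)) := by
    intro u v
    rw [inv_inv, Units.val_mul, Units.val_mul, sandwich]
  have hx_img : ((g₂ * g₁ : GL2 F) : M2 F) * vecMulVec u₁ v₁ *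
      (((((k₁ * k₂)⁻¹)⁻¹ : GL2 F)) : M2 F) = ((1 : Fˣ) : F) • (!![0,1;0,0] : M2 F) := by
    rw [image_eq, hg₁, hk₁, hg₂e, hk₂e]
    ext i j; fin_cases i <;> fin_cases j <;> simp [vecMulVec_apply]
  have hy_img : ((g₂ * g₁ : GL2 F) : M2 F) * vecMulVec u₂ v₂ *
      (((((k₁ * k₂)⁻¹)⁻¹ : GL2 F)) : M2 F)
        = vecMulVec ((g₂ : M2 F).mulVec u') (vecMul v' (k₂ : M2 F)) := by
    rw [image_eq, hu', hv']
  rcases hg₂u with hcol | hcol <;> rcases hk₂v with hrow | hrow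
  · refine ⟨(!![0,1;0,0], !![1,0;0,0]), by simp [orbitReps], g₂ * g₁, (k₁ * k₂)⁻¹, 1,
      Units.mk0 (α * β) (mul_ne_zero hα hβ), hx_img, ?_⟩
    rw [hy_img, hcol, hrow, _root_.smul_vecMulVec]
    congr 1
    ext i j; fin_cases i <;> fin_cases j <;> simp [vecMulVec_apply]
  · refine ⟨(!![0,1;0,0], !![0,1;0,0]), by simp [orbitReps], g₂ * g₁, (k₁ * k₂)⁻¹, 1,
      Units.mk0 (α * β) (mul_ne_zero hα hβ), hx_img, ?_⟩
    rw [hy_img, hcol, hrow, _root_.smul_vecMulVec]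
    congr 1
    ext i j; fin_cases i <;> fin_cases j <;> simp [vecMulVec_apply]
  · refine ⟨(!![0,1;0,0], !![0,0;1,0]), by simp [orbitReps], g₂ * g₁, (k₁ * k₂)⁻¹, 1,
      Units.mk0 (α * β) (mul_ne_zero hα hβ), hx_img, ?_⟩
    rw [hy_img, hcol, hrow, _root_.smul_vecMulVec]
    congr 1
    ext i j; fin_cases i <;> fin_cases j <;> simp [vecMulVec_apply]
  · refine ⟨(!![0,1;0,0], !![0,0;0,1]), by simp [orbitReps], g₂ * g₁, (k₁ * k₂)⁻¹, 1,
      Units.mk0 (α * β) (mul_ne_zero hα hβ), hx_img, ?_⟩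
    rw [hy_img, hcol, hrow, _root_.smul_vecMulVec]
    congr 1
    ext i j; fin_cases i <;> fin_cases j <;> simp [vecMulVec_apply]

lemma pair_inv {x y : M2 F} (hdx : x.det ≠ 0) (hy : y ≠ 0) (hdy : y.det = 0) :
    ∃ r ∈ orbitReps F, ∃ (g h : GL2 F) (l m : Fˣ),
      (g : M2 F) * x * ((h⁻¹ : GL2 F) : M2 F) = (l : F) • r.1 ∧
      (g : M2 F) * y * ((h⁻¹ : GL2 F) : M2 F) = (m : F) • r.2 := by
  have hXu : IsUnit x := (Matrix.isUnit_iff_isUnit_det x).mpr (isUnit_iff_ne_zero.mpr hdx)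
  set X : GL2 F := hXu.unit with hXdef
  have hX : (X : M2 F) = x := hXu.unit_spec
  set n : M2 F := y * ((X⁻¹ : GL2 F) : M2 F) with hn
  have hnne : n ≠ 0 := by
    intro h
    apply hy
    have : y = n * (X : M2 F) := by
      rw [hn, mul_assoc, Units.inv_mul, mul_one]
    rw [this, h, zero_mul]
  have hndet : n.det = 0 := by
    rw [hn, Matrix.det_mul, hdy, zero_mul]
  obtain ⟨g, c, hc⟩ := conj_rank1 hnne hndet
  have hinv : (((g * X)⁻¹ : GL2 F) : M2 F)
      = ((X⁻¹ : GL2 F) : M2 F) * ((g⁻¹ : GL2 F) : M2 F) := by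
    rw [_root_.mul_inv_rev, Units.val_mul]
  have hxim : (g : M2 F) * x * (((g * X)⁻¹ : GL2 F) : M2 F) = ((1:Fˣ) : F) • (1 : M2 F) := by
    rw [hinv, ← hX]
    have : (g : M2 F) * (X : M2 F) * (((X⁻¹ : GL2 F) : M2 F) * ((g⁻¹ : GL2 F) : M2 F))
        = (g : M2 F) * ((X : M2 F) * ((X⁻¹ : GL2 F) : M2 F)) * ((g⁻¹ : GL2 F) : M2 F) := by
      simp only [mul_assoc]
    rw [this, Units.mul_inv, mul_one, Units.mul_inv, Units.val_one, one_smul]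
  have hyim : (g : M2 F) * y * (((g * X)⁻¹ : GL2 F) : M2 F)
      = (g : M2 F) * n * ((g⁻¹ : GL2 F) : M2 F) := by
    rw [hinv, hn]
    simp only [mul_assoc]
  rcases hc with hc | hc
  · exact ⟨(1, !![1,0;0,0]), by simp [orbitReps], g, g * X, 1, c, hxim, by rw [hyim, hc]⟩
  · exact ⟨(1, !![0,1;0,0]), by simp [orbitReps], g, g * X, 1, c, hxim, by rw [hyim, hc]⟩

lemma part1 (F : Type) [Field F] : ∀ x y : M2 F, x ≠ 0 → y ≠ 0 → (x.det = 0 ∨ y.det = 0) →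
    ∃ r ∈ orbitReps F, pairEquiv F (x, y) r := by
  intro x y hx hy hd
  by_cases hdx : x.det = 0
  · by_cases hdy : y.det = 0
    · obtain ⟨r, hr, g, h, l, m, h1, h2⟩ := pair_sing hx hy hdx hdy
      exact ⟨r, hr, g, h, l, m, Or.inl ⟨h1, h2⟩⟩
    · obtain ⟨r, hr, g, h, l, m, h1, h2⟩ := pair_inv hdy hx hdx
      exact ⟨r, hr, g, h, l, m, Or.inr ⟨h1, h2⟩⟩
  · have hdy : y.det = 0 := hd.resolve_left hdx
    obtain ⟨r, hr, g, h, l, m, h1, h2⟩ := pair_inv hdx hy hdy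
    exact ⟨r, hr, g, h, l, m, Or.inl ⟨h1, h2⟩⟩

lemma unact (g h : GL2 F) (A : M2 F) :
    ((g⁻¹ : GL2 F) : M2 F) * ((g : M2 F) * A * ((h⁻¹ : GL2 F) : M2 F)) * (h : M2 F) = A := by
  simp only [← mul_assoc, Units.inv_mul, one_mul]
  rw [mul_assoc, Units.inv_mul, mul_one]

lemma act_cancel {g h : GL2 F} {A B : M2 F}
    (he : (g : M2 F) * A * ((h⁻¹ : GL2 F) : M2 F) = (g : M2 F) * B * ((h⁻¹ : GL2 F) : M2 F)) :
    A = B := by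
  have := congrArg (fun M => ((g⁻¹ : GL2 F) : M2 F) * M * (h : M2 F)) he
  simpa only [unact] using this

lemma act_smul (g h : GL2 F) (c : F) (A : M2 F) :
    (g : M2 F) * (c • A) * ((h⁻¹ : GL2 F) : M2 F)
      = c • ((g : M2 F) * A * ((h⁻¹ : GL2 F) : M2 F)) := by
  rw [mul_smul_comm, smul_mul_assoc]

lemma act_det {g h : GL2 F} {A B : M2 F}
    (he : (g : M2 F) * A * ((h⁻¹ : GL2 F) : M2 F) = B) : A.det = 0 ↔ B.det = 0 := by
  have hg : ((g : M2 F)).det ≠ 0 := by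
    have := (Matrix.isUnit_iff_isUnit_det (g : M2 F)).mp g.isUnit
    exact this.ne_zero
  have hh : (((h⁻¹ : GL2 F) : M2 F)).det ≠ 0 := by
    have := (Matrix.isUnit_iff_isUnit_det ((h⁻¹ : GL2 F) : M2 F)).mp (h⁻¹).isUnit
    exact this.ne_zero
  have hh2 : ((h : M2 F)).det ≠ 0 := by
    have := (Matrix.isUnit_iff_isUnit_det (h : M2 F)).mp h.isUnit
    exact this.ne_zero
  rw [← he, Matrix.det_mul, Matrix.det_mul, mul_eq_zero, mul_eq_zero]
  simp [hg, hh, hh2]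

lemma prop_of {g h : GL2 F} {A B C : M2 F} {l m : Fˣ}
    (e1 : (g : M2 F) * A * ((h⁻¹ : GL2 F) : M2 F) = (l : F) • C)
    (e2 : (g : M2 F) * B * ((h⁻¹ : GL2 F) : M2 F) = (m : F) • C) :
    (m : F) • A = (l : F) • B := by
  apply act_cancel (g := g) (h := h)
  rw [act_smul, act_smul, e1, e2, smul_smul, smul_smul, mul_comm]

lemma sub_act {g h : GL2 F} {A B C D : M2 F}
    (e1 : (g : M2 F) * A * ((h⁻¹ : GL2 F) : M2 F) = C)
    (e2 : (g : M2 F) * B * ((h⁻¹ : GL2 F) : M2 F) = D) :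
    (g : M2 F) * (A - B) * ((h⁻¹ : GL2 F) : M2 F) = C - D := by
  rw [mul_sub, sub_mul, e1, e2]

lemma no_unit_to_sing {g h : GL2 F} {c : Fˣ} {C : M2 F} (hC : C.det = 0)
    (he : (g : M2 F) * (1 : M2 F) * ((h⁻¹ : GL2 F) : M2 F) = (c : F) • C) : False := by
  have := act_det he
  simp [Matrix.det_one, Matrix.det_smul, hC] at this

lemma no_common_left_kernel {g h : GL2 F} {A B : M2 F} {l m : Fˣ}
    (hA : vecMul ![(0:F),1] A = 0) (hB : vecMul ![(0:F),1] B = 0)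
    (e1 : (g : M2 F) * A * ((h⁻¹ : GL2 F) : M2 F) = (l : F) • !![0,1;0,0])
    (e2 : (g : M2 F) * B * ((h⁻¹ : GL2 F) : M2 F) = (m : F) • !![0,0;0,1]) : False := by
  set w' : Fin 2 → F := vecMul ![(0:F),1] ((g⁻¹ : GL2 F) : M2 F) with hw'
  have key : ∀ (X Y : M2 F) (c : Fˣ), vecMul ![(0:F),1] X = 0 →
      (g : M2 F) * X * ((h⁻¹ : GL2 F) : M2 F) = (c : F) • Y → vecMul w' Y = 0 := by
    intro X Y c hX hXY
    have h1 : vecMul w' ((c : F) • Y) = 0 := by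
      rw [← hXY, hw', vecMul_vecMul]
      have : ((g⁻¹ : GL2 F) : M2 F) * ((g : M2 F) * X * ((h⁻¹ : GL2 F) : M2 F))
          = X * ((h⁻¹ : GL2 F) : M2 F) := by
        simp only [← mul_assoc, Units.inv_mul, one_mul]
      rw [this, ← vecMul_vecMul, hX, Matrix.zero_vecMul]
    have h2 : (c : F) • vecMul w' Y = 0 := by
      rw [← h1]; ext j
      simp [Matrix.vecMul, dotProduct, Fin.sum_univ_two, Matrix.smul_apply]
      ring
    rcases smul_eq_zero.mp h2 with hc | hok
    · exact absurd hc c.ne_zero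
    · exact hok
  have k1 := key A _ l hA e1
  have k2 := key B _ m hB e2
  have hw0 : w' 0 = 0 := by
    have := congrFun k1 1
    simpa [Matrix.vecMul, dotProduct, Fin.sum_univ_two] using this
  have hw1 : w' 1 = 0 := by
    have := congrFun k2 1
    simpa [Matrix.vecMul, dotProduct, Fin.sum_univ_two] using this
  have : vecMul w' (g : M2 F) = ![(0:F),1] := by
    rw [hw', vecMul_vecMul, Units.inv_mul, Matrix.vecMul_one]
  have h10 := congrFun this 1
  simp [Matrix.vecMul, dotProduct, Fin.sum_univ_two, hw0, hw1] at h10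

lemma no_sing_to_unit {g h : GL2 F} {c : Fˣ} {A : M2 F} (hA : A.det = 0)
    (he : (g : M2 F) * A * ((h⁻¹ : GL2 F) : M2 F) = (c : F) • (1 : M2 F)) : False := by
  have := (act_det he).mp hA
  simp [Matrix.det_smul, Matrix.det_one, pow_eq_zero_iff] at this

lemma part2 (F : Type) [Field F] :
    (orbitReps F).Pairwise (fun p q => ¬ pairEquiv F p q) := by
  simp only [orbitReps, List.pairwise_cons, List.mem_cons, List.not_mem_nil, or_false,
    List.mem_singleton, forall_eq_or_imp, forall_eq, List.Pairwise.nil, and_true]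
  refine ⟨⟨?_, ?_, ?_, ?_, ?_⟩, ⟨?_, ?_, ?_, ?_⟩, ⟨?_, ?_, ?_⟩, ⟨?_, ?_⟩, ?_, fun _ h => h.elim⟩
  · intro hp; simp only [pairEquiv] at hp
    obtain ⟨g, h, l, m, ⟨e1, e2⟩ | ⟨e1, e2⟩⟩ := hp
    · have h3 := act_det (sub_act e1 e2)
      have h4 := h3.mp (by simp [Matrix.det_fin_two, Matrix.sub_apply, Matrix.one_apply])
      simp [Matrix.det_fin_two, Matrix.sub_apply, Matrix.smul_apply, Matrix.one_apply] at h4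
    · exact no_sing_to_unit (by simp [Matrix.det_fin_two_of]) e1
  · intro hp; simp only [pairEquiv] at hp
    obtain ⟨g, h, l, m, ⟨e1, e2⟩ | ⟨e1, e2⟩⟩ := hp
    · exact no_unit_to_sing (by simp [Matrix.det_fin_two_of]) e1
    · exact no_unit_to_sing (by simp [Matrix.det_fin_two_of]) e2
  · intro hp; simp only [pairEquiv] at hp
    obtain ⟨g, h, l, m, ⟨e1, e2⟩ | ⟨e1, e2⟩⟩ := hp
    · exact no_unit_to_sing (by simp [Matrix.det_fin_two_of]) e1
    · exact no_unit_to_sing (by simp [Matrix.det_fin_two_of]) e2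
  · intro hp; simp only [pairEquiv] at hp
    obtain ⟨g, h, l, m, ⟨e1, e2⟩ | ⟨e1, e2⟩⟩ := hp
    · exact no_unit_to_sing (by simp [Matrix.det_fin_two_of]) e1
    · exact no_unit_to_sing (by simp [Matrix.det_fin_two_of]) e2
  · intro hp; simp only [pairEquiv] at hp
    obtain ⟨g, h, l, m, ⟨e1, e2⟩ | ⟨e1, e2⟩⟩ := hp
    · exact no_unit_to_sing (by simp [Matrix.det_fin_two_of]) e1
    · exact no_unit_to_sing (by simp [Matrix.det_fin_two_of]) e2
  · intro hp; simp only [pairEquiv] at hp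
    obtain ⟨g, h, l, m, ⟨e1, e2⟩ | ⟨e1, e2⟩⟩ := hp
    · exact no_unit_to_sing (by simp [Matrix.det_fin_two_of]) e1
    · exact no_unit_to_sing (by simp [Matrix.det_fin_two_of]) e2
  · intro hp; simp only [pairEquiv] at hp
    obtain ⟨g, h, l, m, ⟨e1, e2⟩ | ⟨e1, e2⟩⟩ := hp
    · exact no_unit_to_sing (by simp [Matrix.det_fin_two_of]) e1
    · exact no_unit_to_sing (by simp [Matrix.det_fin_two_of]) e2
  · intro hp; simp only [pairEquiv] at hp
    obtain ⟨g, h, l, m, ⟨e1, e2⟩ | ⟨e1, e2⟩⟩ := hp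
    · exact no_unit_to_sing (by simp [Matrix.det_fin_two_of]) e1
    · exact no_unit_to_sing (by simp [Matrix.det_fin_two_of]) e2
  · intro hp; simp only [pairEquiv] at hp
    obtain ⟨g, h, l, m, ⟨e1, e2⟩ | ⟨e1, e2⟩⟩ := hp
    · exact no_unit_to_sing (by simp [Matrix.det_fin_two_of]) e1
    · exact no_unit_to_sing (by simp [Matrix.det_fin_two_of]) e2
  · intro hp; simp only [pairEquiv] at hp
    obtain ⟨g, h, l, m, ⟨e1, e2⟩ | ⟨e1, e2⟩⟩ := hp
    · have hP := prop_of e1 e2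
      have h5 := congrFun (congrFun hP 0) 1
      simp [Matrix.smul_apply] at h5
    · have hP := prop_of e1 e2
      have h5 := congrFun (congrFun hP 0) 0
      simp [Matrix.smul_apply] at h5
  · intro hp; simp only [pairEquiv] at hp
    obtain ⟨g, h, l, m, ⟨e1, e2⟩ | ⟨e1, e2⟩⟩ := hp <;>
    · have h3 := act_det (sub_act e1 e2)
      have h4 := h3.mp (by simp [Matrix.det_fin_two, Matrix.sub_apply])
      simp [Matrix.det_fin_two, Matrix.sub_apply, Matrix.smul_apply] at h4
  · intro hp; simp only [pairEquiv] at hp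
    obtain ⟨g, h, l, m, ⟨e1, e2⟩ | ⟨e1, e2⟩⟩ := hp <;>
    · exact no_common_left_kernel
        (by ext j; fin_cases j <;> simp [Matrix.vecMul, dotProduct, Fin.sum_univ_two])
        (by ext j; fin_cases j <;> simp [Matrix.vecMul, dotProduct, Fin.sum_univ_two])
        e1 e2
  · intro hp; simp only [pairEquiv] at hp
    obtain ⟨g, h, l, m, ⟨e1, e2⟩ | ⟨e1, e2⟩⟩ := hp <;>
    · have h5 := congrFun (congrFun (e1.symm.trans e2) 0) 1
      simp [Matrix.smul_apply] at h5
  · intro hp; simp only [pairEquiv] at hp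
    obtain ⟨g, h, l, m, ⟨e1, e2⟩ | ⟨e1, e2⟩⟩ := hp <;>
    · have h5 := congrFun (congrFun (e1.symm.trans e2) 0) 1
      simp [Matrix.smul_apply] at h5
  · intro hp; simp only [pairEquiv] at hp
    obtain ⟨g, h, l, m, ⟨e1, e2⟩ | ⟨e1, e2⟩⟩ := hp <;>
    · have h3 := act_det (sub_act e1 e2)
      have h4 := h3.mpr (by simp [Matrix.det_fin_two, Matrix.sub_apply, Matrix.smul_apply])
      simp [Matrix.det_fin_two, Matrix.sub_apply] at h4

end Aux

/-- Every pair of nonzero 2×2 matrices, at least one of which is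
singular, is equivalent to exactly one of the six listed representative pairs; the six
representatives lie in pairwise distinct classes. -/
theorem boundary_orbit_classification (F : Type) [Field F] :
    (∀ x y : M2 F, x ≠ 0 → y ≠ 0 → (x.det = 0 ∨ y.det = 0) →
      ∃ r ∈ orbitReps F, pairEquiv F (x, y) r) ∧
    (orbitReps F).Pairwise (fun p q => ¬ pairEquiv F p q) := by
  exact ⟨part1 F, part2 F⟩
end
end

section
/- Let F be a nontrivially normed field. Then the pair (E₁₂, E₁₂) lies in the closure, in M₂(F) × M₂(F) with the product topology, of the set { (λ•(g·E₁₂·h⁻¹), μ•(g·E₁₁·h⁻¹)) : g, h ∈ GL₂(F), λ, μ ∈ Fˣ }; equivalently, the point ([E₁₂],[E₁₂]) of ℙ(M₂(F))² lies in the closure of the PGL₂(F)×PGL₂(F)-orbit of ([E₁₂],[E₁₁]). -/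
open Matrix

noncomputable section

/-- Over a nontrivially normed field `F`, the pair `(E₁₂, E₁₂)` lies
in the closure of the set of pairs `(λ•(g·E₁₂·h⁻¹), μ•(g·E₁₁·h⁻¹))` with
`g, h ∈ GL₂(F)` and `λ, μ ∈ Fˣ`; i.e. `([E₁₂],[E₁₂])` lies in the closure of the
`PGL₂×PGL₂`-orbit of `([E₁₂],[E₁₁])`. -/
theorem pair_E12_E12_mem_closure_orbit (F : Type) [NontriviallyNormedField F] :
    ((!![0,1;0,0] : M2 F), (!![0,1;0,0] : M2 F)) ∈ closure
      {p : M2 F × M2 F | ∃ (g h : GL2 F) (l m : Fˣ),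
        p = ((l : F) • ((g : M2 F) * !![0,1;0,0] * ((h⁻¹ : GL2 F) : M2 F)),
             (m : F) • ((g : M2 F) * !![1,0;0,0] * ((h⁻¹ : GL2 F) : M2 F)))} := by
  obtain ⟨ξ, hξ0, hξ1⟩ := NormedField.exists_norm_lt_one F
  have hξne : ξ ≠ 0 := norm_pos_iff.mp hξ0
  set f : ℕ → M2 F × M2 F :=
    fun n => ((!![0,1;0,0] : M2 F), (!![ξ^n,1;0,0] : M2 F)) with hf
  have hunit : ∀ n : ℕ,
      (!![1, -(ξ^n)⁻¹; 0, 1] : M2 F) * !![1, (ξ^n)⁻¹; 0, 1] = 1 ∧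
      (!![1, (ξ^n)⁻¹; 0, 1] : M2 F) * !![1, -(ξ^n)⁻¹; 0, 1] = 1 := by
    intro n
    constructor <;>
    · ext i j
      fin_cases i <;> fin_cases j <;>
        simp [Matrix.mul_apply, Fin.sum_univ_two, Matrix.one_apply]
  have hmem : ∀ n : ℕ, f n ∈
      {p : M2 F × M2 F | ∃ (g h : GL2 F) (l m : Fˣ),
        p = ((l : F) • ((g : M2 F) * !![0,1;0,0] * ((h⁻¹ : GL2 F) : M2 F)),
             (m : F) • ((g : M2 F) * !![1,0;0,0] * ((h⁻¹ : GL2 F) : M2 F)))} := by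
    intro n
    refine ⟨1, ⟨!![1, -(ξ^n)⁻¹; 0, 1], !![1, (ξ^n)⁻¹; 0, 1],
      (hunit n).1, (hunit n).2⟩, 1, Units.mk0 (ξ^n) (pow_ne_zero _ hξne), ?_⟩
    have hpow : ξ^n * (ξ^n)⁻¹ = 1 := mul_inv_cancel₀ (pow_ne_zero _ hξne)
    simp only [hf, Units.val_one, Units.inv_mk, Units.val_mk0]
    refine Prod.ext ?_ ?_ <;>
    · show _ = (_ : F) • ((1 : M2 F) * _ * _)
      rw [one_mul]
      ext i j
      fin_cases i <;> fin_cases j <;>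
        simp [Matrix.mul_apply, Fin.sum_univ_two, hpow]
  have heq : ∀ n : ℕ, (!![ξ^n,1;0,0] : M2 F)
      = ξ^n • (!![1,0;0,0] : M2 F) + !![0,1;0,0] := by
    intro n
    ext i j
    fin_cases i <;> fin_cases j <;> simp
  have htend : Filter.Tendsto f Filter.atTop
      (nhds ((!![0,1;0,0] : M2 F), (!![0,1;0,0] : M2 F))) := by
    rw [hf]
    refine Filter.Tendsto.prodMk_nhds tendsto_const_nhds ?_
    have h0 : Filter.Tendsto (fun n : ℕ => ξ^n) Filter.atTop (nhds 0) :=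
      tendsto_pow_atTop_nhds_zero_of_norm_lt_one hξ1
    have : Filter.Tendsto
        (fun n : ℕ => ξ^n • (!![1,0;0,0] : M2 F) + !![0,1;0,0]) Filter.atTop
        (nhds ((0:F) • (!![1,0;0,0] : M2 F) + !![0,1;0,0])) :=
      (h0.smul_const _).add tendsto_const_nhds
    simp only [zero_smul, zero_add] at this
    simpa only [heq] using this
  exact mem_closure_of_tendsto htend (Filter.Eventually.of_forall hmem)
end
end
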